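/- arXiv:1502.03037 — 5 statements merged into one kernel-verified Lean document; each statement's English description precedes it below -/
import Mathlib

section
/- Let n ≥ 1 and consider the 2n×2n grid graph. For every cell c and every cell c' adjacent to c, there exists a Hamiltonian path whose first vertex is c and whose second vertex is c'. That is, a maximum walk of length (2n)² − 1 can be initiated at any cell through any prescribed neighboring side. -/
/-- The `m × m` grid graph on cells `Fin m × Fin m`: two cells are adjacent iff
`|i - i| + |j - j| = 1`, i.e. they agree in one coordinate and the other
coordinates differ by exactly 1. -/
def gridGraph (m : ℕ) : SimpleGraph (Fin m × Fin m) where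
  Adj c c' := ((c.1 : ℤ) - (c'.1 : ℤ)).natAbs + ((c.2 : ℤ) - (c'.2 : ℤ)).natAbs = 1
  symm := ⟨by intro c c' h; omega⟩
  loopless := ⟨by intro c; simp⟩

instance (m : ℕ) : DecidableRel (gridGraph m).Adj :=
  fun _ _ => inferInstanceAs (Decidable (_ = 1))

namespace GridHam


def nadj (a b : ℕ × ℕ) : Prop :=
  ((a.1:ℤ) - b.1).natAbs + ((a.2:ℤ) - b.2).natAbs = 1

lemma nadj_symm {a b : ℕ × ℕ} (h : nadj a b) : nadj b a := by
  simp only [nadj] at *; omega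

/-- The snake Hamiltonian cycle on the `m × m` grid (`m` even):
row 0 rightward, then serpentine through rows `1..m-1` and columns `1..m-1`,
then return up column 0. -/
def cyc (m t : ℕ) : ℕ × ℕ :=
  if t < m then (0, t)
  else if t < m + (m-1)*(m-1) then
    (1 + (t - m) / (m-1),
     if ((t - m) / (m-1)) % 2 = 0 then (m-1) - (t - m) % (m-1) else 1 + (t - m) % (m-1))
  else (m - 1 - (t - (m + (m-1)*(m-1))), 0)

lemma sq_facts (m : ℕ) (hm : 2 ≤ m) :
    (m-1)*(m-2) + (m-1) = (m-1)*(m-1) ∧ m + (m-1)*(m-1) + (m-1) = m*m := by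
  obtain ⟨k, rfl⟩ : ∃ k, m = k+2 := ⟨m-2, by omega⟩
  constructor <;>
    · simp only [show k+2-1 = k+1 by omega, show k+2-2 = k by omega]
      ring

lemma divmod_eq (b r c : ℕ) (hb : 0 < b) (hc : c < b) :
    (c + b*r) / b = r ∧ (c + b*r) % b = c := by
  constructor
  · rw [Nat.add_mul_div_left _ _ hb, Nat.div_eq_of_lt hc]; omega
  · rw [Nat.add_mul_mod_self_left, Nat.mod_eq_of_lt hc]

lemma cyc_A (m j : ℕ) (hj : j < m) : cyc m j = (0, j) := by simp [cyc, hj]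

def idxB (m i j : ℕ) : ℕ :=
  m + ((if (i-1) % 2 = 0 then (m-1) - j else j - 1) + (m-1)*(i-1))

lemma cyc_B (m i j : ℕ) (hm : 2 ≤ m) (hi1 : 1 ≤ i) (hi : i < m) (hj1 : 1 ≤ j) (hj : j < m) :
    cyc m (idxB m i j) = (i, j) ∧ m ≤ idxB m i j ∧ idxB m i j < m + (m-1)*(m-1) := by
  have hA := (sq_facts m hm).1
  set c := if (i-1) % 2 = 0 then (m-1) - j else j - 1 with hcdef
  have hcb : c < m - 1 := by rw [hcdef]; split <;> omega
  obtain ⟨hdiv, hmod2⟩ := divmod_eq (m-1) (i-1) c (by omega) hcb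
  have hrb : (m-1)*(i-1) ≤ (m-1)*(m-2) := Nat.mul_le_mul_left _ (by omega)
  have hbound : c + (m-1)*(i-1) < (m-1)*(m-1) := by omega
  have hidx : idxB m i j = m + (c + (m-1)*(i-1)) := by rw [idxB, ← hcdef]
  refine ⟨?_, by omega, by omega⟩
  rw [hidx]
  unfold cyc
  rw [if_neg (show ¬ m + (c + (m-1)*(i-1)) < m by omega), if_pos (by omega)]
  simp only [Nat.add_sub_cancel_left, hdiv, hmod2]
  rw [Prod.mk.injEq]
  constructor
  · omega
  · rw [hcdef]
    by_cases hp : (i-1) % 2 = 0 <;> simp only [hp, if_pos, if_neg, if_true, if_false] <;> omega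

lemma cyc_C (m i : ℕ) (hm : 2 ≤ m) (hi1 : 1 ≤ i) (hi : i < m) :
    cyc m (m + (m-1)*(m-1) + (m-1-i)) = (i, 0) ∧ m + (m-1)*(m-1) + (m-1-i) < m*m := by
  have hB := (sq_facts m hm).2
  refine ⟨?_, by omega⟩
  unfold cyc
  rw [if_neg (show ¬ m + (m-1)*(m-1) + (m-1-i) < m by omega),
      if_neg (show ¬ m + (m-1)*(m-1) + (m-1-i) < m + (m-1)*(m-1) by omega),
      Nat.add_sub_cancel_left, Prod.mk.injEq]
  omega

lemma cyc_lt (m t : ℕ) (hm : 2 ≤ m) (ht : t < m*m) :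
    (cyc m t).1 < m ∧ (cyc m t).2 < m := by
  have hB := (sq_facts m hm).2
  by_cases h1 : t < m
  · rw [cyc_A m t h1]; exact ⟨by omega, h1⟩
  by_cases h2 : t < m + (m-1)*(m-1)
  · have hs : t - m < (m-1)*(m-1) := by omega
    have hd : (t-m)/(m-1) < m-1 := (Nat.div_lt_iff_lt_mul (by omega)).2 hs
    have hq : (t-m) % (m-1) < m-1 := Nat.mod_lt _ (by omega)
    rw [cyc]
    rw [if_neg h1, if_pos h2]
    constructor
    · show 1 + (t-m)/(m-1) < m; omega
    · show (if ((t - m) / (m-1)) % 2 = 0 then (m-1) - (t - m) % (m-1) else 1 + (t - m) % (m-1)) < m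
      split <;> omega
  · rw [cyc, if_neg h1, if_neg h2]
    exact ⟨by show m - 1 - _ < m; omega, by show 0 < m; omega⟩

lemma cyc_adj (m t : ℕ) (hm : 2 ≤ m) (hmod : m % 2 = 0) (ht : t + 1 < m*m) :
    nadj (cyc m t) (cyc m (t+1)) := by
  have hA := (sq_facts m hm).1
  have hB := (sq_facts m hm).2
  by_cases h1 : t + 1 < m
  · rw [cyc_A m t (by omega), cyc_A m (t+1) h1]
    simp only [nadj]; omega
  by_cases h1' : t + 1 = m
  · have e1 : cyc m t = (0, m-1) := by
      rw [show t = m - 1 by omega]; exact cyc_A m (m-1) (by omega)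
    have e2 : cyc m (t+1) = (1, m-1) := by
      rw [h1']; rw [cyc]
      rw [if_neg (lt_irrefl m), if_pos (by omega), Nat.sub_self]
      rw [Nat.zero_div, Nat.zero_mod, Prod.mk.injEq]
      norm_num
    rw [e1, e2]; simp only [nadj]; omega
  by_cases h2 : t + 1 < m + (m-1)*(m-1)
  · -- both in serpentine region
    have hmt : m ≤ t := by omega
    have hdm := Nat.div_add_mod (t-m) (m-1)
    set r := (t-m) / (m-1) with hr
    set q := (t-m) % (m-1) with hq
    have hqb : q < m-1 := Nat.mod_lt _ (by omega)
    have hrb : r < m-1 := (Nat.div_lt_iff_lt_mul (by omega)).2 (by omega)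
    have et1 : t + 1 - m = (t - m) + 1 := by omega
    have ec1 : cyc m t =
        (1 + r, if r % 2 = 0 then (m-1) - q else 1 + q) := by
      rw [cyc, if_neg (show ¬ t < m by omega), if_pos (by omega)]
    by_cases hql : q + 1 < m - 1
    · obtain ⟨hd2, hm2⟩ : ((t-m)+1)/(m-1) = r ∧ ((t-m)+1)%(m-1) = q+1 := by
        rw [show (t-m)+1 = (q+1) + (m-1)*r by omega]
        exact divmod_eq (m-1) r (q+1) (by omega) hql
      have ec2 : cyc m (t+1) =
          (1 + r, if r % 2 = 0 then (m-1) - (q+1) else 1 + (q+1)) := by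
        rw [cyc, if_neg (show ¬ t + 1 < m by omega), if_pos h2, et1, hd2, hm2]
      rw [ec1, ec2]; simp only [nadj]
      split_ifs <;> omega
    · obtain ⟨hd2, hm2⟩ : ((t-m)+1)/(m-1) = r+1 ∧ ((t-m)+1)%(m-1) = 0 := by
        rw [show (t-m)+1 = 0 + (m-1)*(r+1) by
          have : (m-1)*(r+1) = (m-1)*r + (m-1) := by ring
          omega]
        exact divmod_eq (m-1) (r+1) 0 (by omega) (by omega)
      have ec2 : cyc m (t+1) =
          (1 + (r+1), if (r+1) % 2 = 0 then (m-1) - 0 else 1 + 0) := by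
        rw [cyc, if_neg (show ¬ t + 1 < m by omega), if_pos h2, et1, hd2, hm2]
      rw [ec1, ec2]; simp only [nadj]
      split_ifs <;> omega
  by_cases h2' : t + 1 = m + (m-1)*(m-1)
  · -- last of serpentine to corner (m-1, 0)
    have e1 : cyc m t = (m-1, 1) := by
      have h := (cyc_B m (m-1) 1 hm (by omega) (by omega) (by omega) (by omega)).1
      have hpar : (m - 1 - 1) % 2 = 0 := by omega
      have hidx : idxB m (m-1) 1 = t := by
        rw [idxB, if_pos hpar, show m - 1 - 1 = m - 2 by omega]
        omega
      rw [← hidx]; exact h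
    have e2 : cyc m (t+1) = (m-1, 0) := by
      rw [h2', cyc]
      rw [if_neg (show ¬ m + (m-1)*(m-1) < m by omega),
          if_neg (lt_irrefl _), Nat.sub_self, Nat.sub_zero]
    rw [e1, e2]; simp only [nadj]; omega
  · -- both in return column
    have hge : m + (m-1)*(m-1) ≤ t := by omega
    have e1 : cyc m t = (m - 1 - (t - (m + (m-1)*(m-1))), 0) := by
      rw [cyc, if_neg (show ¬ t < m by omega), if_neg (by omega)]
    have e2 : cyc m (t+1) = (m - 1 - (t + 1 - (m + (m-1)*(m-1))), 0) := by
      rw [cyc, if_neg (show ¬ t + 1 < m by omega), if_neg (by omega)]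
    rw [e1, e2]; simp only [nadj]
    omega

lemma cyc_wrap (m : ℕ) (hm : 2 ≤ m) : nadj (cyc m (m*m - 1)) (cyc m 0) := by
  have hB := (sq_facts m hm).2
  have e2 : cyc m 0 = (0, 0) := cyc_A m 0 (by omega)
  have e1 : cyc m (m*m - 1) = (1, 0) := by
    have h := (cyc_C m 1 hm le_rfl (by omega)).1
    have : m + (m-1)*(m-1) + (m-1-1) = m*m - 1 := by omega
    rw [← this]; exact h
  rw [e1, e2]; simp only [nadj]; omega

lemma cyc_surj (m i j : ℕ) (hm : 2 ≤ m) (hi : i < m) (hj : j < m) :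
    ∃ t, t < m*m ∧ cyc m t = (i, j) := by
  have hB := (sq_facts m hm).2
  by_cases hi0 : i = 0
  · exact ⟨j, by omega, by rw [hi0]; exact cyc_A m j hj⟩
  by_cases hj0 : j = 0
  · refine ⟨m + (m-1)*(m-1) + (m-1-i), (cyc_C m i hm (by omega) hi).2, ?_⟩
    rw [hj0]; exact (cyc_C m i hm (by omega) hi).1
  · obtain ⟨h1, _, h3⟩ := cyc_B m i j hm (by omega) hi (by omega) hj
    exact ⟨idxB m i j, by omega, h1⟩



variable {V : Type*} {G : SimpleGraph V}

/-- Build a walk from an adjacency-respecting sequence. -/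
def mkWalk (f : ℕ → V) (N : ℕ) (hadj : ∀ t, t + 1 < N → G.Adj (f t) (f (t+1))) :
    (d : ℕ) → (k : ℕ) → (k + d = N - 1) → G.Walk (f k) (f (N-1))
  | 0, k, hk => (SimpleGraph.Walk.nil' (f (N-1))).copy (congrArg f (by omega)) rfl
  | d+1, k, hk => SimpleGraph.Walk.cons (hadj k (by omega)) (mkWalk f N hadj d (k+1) (by omega))

lemma support_mkWalk (f : ℕ → V) (N : ℕ) (hadj : ∀ t, t + 1 < N → G.Adj (f t) (f (t+1))) :
    ∀ (d k : ℕ) (hk : k + d = N - 1),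
      (mkWalk f N hadj d k hk).support = (List.range (d+1)).map (fun i => f (k+i)) := by
  intro d
  induction d with
  | zero =>
      intro k hk
      simp only [mkWalk, SimpleGraph.Walk.support_copy, SimpleGraph.Walk.support_nil,
        List.range_succ, List.range_zero, List.nil_append, List.map_cons, List.map_nil]
      rw [show k + 0 = N - 1 by omega]
  | succ d ih =>
      intro k hk
      rw [mkWalk, SimpleGraph.Walk.support_cons, ih (k+1) (by omega),
        show List.range (d+1+1) = 0 :: (List.range (d+1)).map Nat.succ from
          List.range_succ_eq_map,
        List.map_cons, List.map_map]
      simp only [Nat.add_zero]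
      refine congrArg (List.cons (f k)) (List.map_congr_left fun i _ => ?_)
      show f (k+1+i) = f (k+(i+1))
      exact congrArg f (by omega)

lemma getVert_one_mkWalk (f : ℕ → V) (N : ℕ) (hadj : ∀ t, t + 1 < N → G.Adj (f t) (f (t+1)))
    (d k : ℕ) (hk : k + (d+1) = N - 1) :
    (mkWalk f N hadj (d+1) k hk).getVert 1 = f (k+1) := by
  rw [mkWalk]
  simp [SimpleGraph.Walk.getVert]

lemma goodSeq_to_ham (m : ℕ) (hm : 2 ≤ m) (f : ℕ → Fin m × Fin m)
    (hadj : ∀ t, t + 1 < m*m → (gridGraph m).Adj (f t) (f (t+1)))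
    (hsurj : ∀ v, ∃ t, t < m*m ∧ f t = v) :
    ∃ (v : Fin m × Fin m) (p : (gridGraph m).Walk (f 0) v),
      p.IsHamiltonian ∧ p.getVert 1 = f 1 := by
  set N := m*m with hN
  have hN4 : 4 ≤ N := by rw [hN]; nlinarith
  have hinj : ∀ s t, s < N → t < N → f s = f t → s = t := by
    have hcard : Fintype.card (Fin m × Fin m) = N := by simp [hN]
    have hsurj' : Function.Surjective (fun t : Fin N => f t) := by
      intro v; obtain ⟨t, ht, hft⟩ := hsurj v; exact ⟨⟨t, ht⟩, hft⟩
    have hbij : Function.Bijective (fun t : Fin N => f t) := by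
      rw [Fintype.bijective_iff_surjective_and_card]
      exact ⟨hsurj', by simp [hcard]⟩
    intro s t hs ht hst
    have := hbij.injective (a₁ := ⟨s, hs⟩) (a₂ := ⟨t, ht⟩) hst
    exact congrArg Fin.val this
  obtain ⟨d, hd⟩ : ∃ d, N - 1 = d + 1 := ⟨N - 2, by omega⟩
  refine ⟨f (N-1), mkWalk f N hadj (d+1) 0 (by omega), ?_, ?_⟩
  · intro v
    rw [support_mkWalk, show d+1+1 = N by omega]
    have hmem : v ∈ (List.range N).map (fun i => f (0+i)) := by
      obtain ⟨t, ht, hft⟩ := hsurj v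
      exact List.mem_map.2 ⟨t, List.mem_range.2 (by omega), by simpa using hft⟩
    have hnd : ((List.range N).map (fun i => f (0+i))).Nodup := by
      refine List.Nodup.map_on ?_ List.nodup_range
      intro s hs t ht hst
      exact hinj s t (List.mem_range.1 hs) (List.mem_range.1 ht) (by simpa using hst)
    convert List.count_eq_one_of_mem hnd hmem using 2
    exact lawful_beq_subsingleton _ _
  · simpa using getVert_one_mkWalk f N hadj d 0 (by omega)

def toFin (m : ℕ) (hm : 0 < m) (p : ℕ × ℕ) : Fin m × Fin m :=
  (⟨p.1 % m, Nat.mod_lt _ hm⟩, ⟨p.2 % m, Nat.mod_lt _ hm⟩)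

lemma adj_iff (m : ℕ) (a b : Fin m × Fin m) :
    (gridGraph m).Adj a b ↔ nadj (a.1.val, a.2.val) (b.1.val, b.2.val) := Iff.rfl

lemma toFin_val (m : ℕ) (hm : 0 < m) (v : Fin m × Fin m) :
    toFin m hm (v.1.val, v.2.val) = v := by
  cases v with
  | mk a b =>
    simp [toFin, Nat.mod_eq_of_lt a.isLt, Nat.mod_eq_of_lt b.isLt]

lemma adj_toFin (m : ℕ) (hm : 0 < m) (a b : ℕ × ℕ) (ha1 : a.1 < m) (ha2 : a.2 < m)
    (hb1 : b.1 < m) (hb2 : b.2 < m) (h : nadj a b) :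
    (gridGraph m).Adj (toFin m hm a) (toFin m hm b) := by
  rw [adj_iff]
  simp only [toFin, nadj] at *
  rw [Nat.mod_eq_of_lt ha1, Nat.mod_eq_of_lt ha2, Nat.mod_eq_of_lt hb1, Nat.mod_eq_of_lt hb2]
  exact h


end GridHam
namespace GridHam

def GS (m : ℕ) (c c' : Fin m × Fin m) : Prop :=
  ∃ f : ℕ → Fin m × Fin m, f 0 = c ∧ f 1 = c' ∧
    (∀ t, t + 1 < m*m → (gridGraph m).Adj (f t) (f (t+1))) ∧
    (∀ v, ∃ t, t < m*m ∧ f t = v)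

lemma GS.transport (m : ℕ) (e : Fin m × Fin m → Fin m × Fin m) (hinv : ∀ x, e (e x) = x)
    (hadje : ∀ a b, (gridGraph m).Adj a b → (gridGraph m).Adj (e a) (e b))
    {c c' : Fin m × Fin m} (h : GS m (e c) (e c')) : GS m c c' := by
  obtain ⟨f, h0, h1, hA, hS⟩ := h
  refine ⟨fun t => e (f t), by show e (f 0) = c; rw [h0, hinv], by show e (f 1) = c'; rw [h1, hinv],
    fun t ht => hadje _ _ (hA t ht), fun v => ?_⟩
  obtain ⟨t, ht, hft⟩ := hS (e v)
  exact ⟨t, ht, by show e (f t) = v; rw [hft, hinv]⟩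

lemma cyc_adj_mod (m x : ℕ) (hm : 2 ≤ m) (hmod : m % 2 = 0) :
    nadj (cyc m (x % (m*m))) (cyc m ((x+1) % (m*m))) := by
  have hN : 0 < m*m := by positivity
  have hxN : x % (m*m) < m*m := Nat.mod_lt _ hN
  have h1N : (1:ℕ) < m*m := by nlinarith
  by_cases h : x % (m*m) = m*m - 1
  · have e : (x+1) % (m*m) = 0 := by
      rw [Nat.add_mod, h, Nat.mod_eq_of_lt h1N, Nat.sub_add_cancel (by omega), Nat.mod_self]
    rw [h, e]; exact cyc_wrap m hm
  · have e : (x+1) % (m*m) = x % (m*m) + 1 := by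
      rw [Nat.add_mod, Nat.mod_eq_of_lt h1N]
      exact Nat.mod_eq_of_lt (by omega)
    rw [e]; exact cyc_adj m (x % (m*m)) hm hmod (by omega)

lemma gs_cyc (m : ℕ) (hm : 2 ≤ m) (hmod : m % 2 = 0) (k k' : ℕ)
    (hk : k < m*m) (hk' : k' < m*m)
    (hstep : (k + 1) % (m*m) = k' ∨ (k' + 1) % (m*m) = k) :
    GS m (toFin m (by omega) (cyc m k)) (toFin m (by omega) (cyc m k')) := by
  have hm0 : 0 < m := by omega
  set N := m*m with hNdef
  have hN : 0 < N := by positivity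
  have h1N : (1:ℕ) < N := by rw [hNdef]; nlinarith
  have hbnd : ∀ u, (cyc m (u % N)).1 < m ∧ (cyc m (u % N)).2 < m :=
    fun u => cyc_lt m _ hm (Nat.mod_lt _ hN)
  rcases hstep with hstep | hstep
  · -- forward traversal
    refine ⟨fun t => toFin m hm0 (cyc m ((k + t) % N)), ?_, ?_, ?_, ?_⟩
    · show toFin m hm0 (cyc m ((k + 0) % N)) = _
      rw [Nat.add_zero, Nat.mod_eq_of_lt hk]
    · show toFin m hm0 (cyc m ((k + 1) % N)) = _
      rw [hstep]
    · intro t ht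
      have e : k + (t+1) = (k + t) + 1 := by omega
      show (gridGraph m).Adj (toFin m hm0 (cyc m ((k + t) % N)))
        (toFin m hm0 (cyc m ((k + (t+1)) % N)))
      rw [e]
      exact adj_toFin m hm0 _ _ (hbnd _).1 (hbnd _).2 (hbnd _).1 (hbnd _).2
        (cyc_adj_mod m (k+t) hm hmod)
    · intro v
      obtain ⟨a, ha, hca⟩ := cyc_surj m v.1.val v.2.val hm v.1.isLt v.2.isLt
      by_cases hak : k ≤ a
      · refine ⟨a - k, by omega, ?_⟩
        show toFin m hm0 (cyc m ((k + (a - k)) % N)) = v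
        rw [show k + (a - k) = a by omega, Nat.mod_eq_of_lt ha, hca, toFin_val]
      · refine ⟨a + N - k, by omega, ?_⟩
        show toFin m hm0 (cyc m ((k + (a + N - k)) % N)) = v
        rw [show k + (a + N - k) = a + N by omega, Nat.add_mod_right,
          Nat.mod_eq_of_lt ha, hca, toFin_val]
  · -- backward traversal
    refine ⟨fun t => toFin m hm0 (cyc m ((k + (N - t % N)) % N)), ?_, ?_, ?_, ?_⟩
    · show toFin m hm0 (cyc m ((k + (N - 0 % N)) % N)) = _
      rw [Nat.zero_mod, Nat.sub_zero, Nat.add_mod_right, Nat.mod_eq_of_lt hk]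
    · show toFin m hm0 (cyc m ((k + (N - 1 % N)) % N)) = _
      rw [Nat.mod_eq_of_lt h1N]
      by_cases hc : k' + 1 = N
      · have hk0 : k = 0 := by rw [← hstep, hc, Nat.mod_self]
        rw [hk0, Nat.zero_add, Nat.mod_eq_of_lt (by omega),
          show N - 1 = k' by omega]
      · have hkk : k = k' + 1 := by rw [← hstep, Nat.mod_eq_of_lt (by omega)]
        rw [hkk, show k' + 1 + (N - 1) = k' + N by omega, Nat.add_mod_right,
          Nat.mod_eq_of_lt hk']
    · intro t ht
      have e1 : t % N = t := Nat.mod_eq_of_lt (by omega)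
      have e2 : (t+1) % N = t+1 := Nat.mod_eq_of_lt (by omega)
      show (gridGraph m).Adj (toFin m hm0 (cyc m ((k + (N - t % N)) % N)))
        (toFin m hm0 (cyc m ((k + (N - (t+1) % N)) % N)))
      rw [e1, e2, show k + (N - t) = (k + (N - (t+1))) + 1 by omega]
      exact adj_toFin m hm0 _ _ (hbnd _).1 (hbnd _).2 (hbnd _).1 (hbnd _).2
        (nadj_symm (cyc_adj_mod m (k + (N - (t+1))) hm hmod))
    · intro v
      obtain ⟨a, ha, hca⟩ := cyc_surj m v.1.val v.2.val hm v.1.isLt v.2.isLt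
      by_cases hak : a ≤ k
      · refine ⟨k - a, by omega, ?_⟩
        show toFin m hm0 (cyc m ((k + (N - (k - a) % N)) % N)) = v
        rw [Nat.mod_eq_of_lt (show k - a < N by omega),
          show k + (N - (k - a)) = a + N by omega, Nat.add_mod_right,
          Nat.mod_eq_of_lt ha, hca, toFin_val]
      · refine ⟨k + N - a, by omega, ?_⟩
        show toFin m hm0 (cyc m ((k + (N - (k + N - a) % N)) % N)) = v
        rw [Nat.mod_eq_of_lt (show k + N - a < N by omega),
          show k + (N - (k + N - a)) = a by omega,
          Nat.mod_eq_of_lt ha, hca, toFin_val]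

end GridHam
namespace GridHam

def flipJ (m : ℕ) (v : Fin m × Fin m) : Fin m × Fin m :=
  (v.1, ⟨m - 1 - v.2.val, by have := v.2.isLt; omega⟩)

def swapC (m : ℕ) (v : Fin m × Fin m) : Fin m × Fin m := (v.2, v.1)

lemma flipJ_invol (m : ℕ) : ∀ v, flipJ m (flipJ m v) = v := by
  rintro ⟨a, b⟩
  simp only [flipJ]
  rw [Prod.mk.injEq]
  exact ⟨rfl, Fin.ext (by have := b.isLt; show m - 1 - (m - 1 - b.val) = b.val; omega)⟩

lemma swapC_invol (m : ℕ) : ∀ v, swapC m (swapC m v) = v := fun v => rfl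

lemma flipJ_adj (m : ℕ) : ∀ a b, (gridGraph m).Adj a b →
    (gridGraph m).Adj (flipJ m a) (flipJ m b) := by
  intro a b h
  rw [adj_iff] at h ⊢
  simp only [flipJ, nadj] at *
  have h1 := a.2.isLt; have h2 := b.2.isLt
  omega

lemma swapC_adj (m : ℕ) : ∀ a b, (gridGraph m).Adj a b →
    (gridGraph m).Adj (swapC m a) (swapC m b) := by
  intro a b h
  rw [adj_iff] at h ⊢
  simp only [swapC, nadj] at *
  omega

lemma flip_toFin (m : ℕ) (hm0 : 0 < m) (i j : ℕ) (hi : i < m) (hj : j < m) :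
    flipJ m (toFin m hm0 (i, j)) = toFin m hm0 (i, m - 1 - j) := by
  simp only [flipJ, toFin]
  rw [Prod.mk.injEq]
  refine ⟨rfl, Fin.ext ?_⟩
  show m - 1 - (j % m) = (m - 1 - j) % m
  rw [Nat.mod_eq_of_lt hj, Nat.mod_eq_of_lt (by omega)]

lemma swap_toFin (m : ℕ) (hm0 : 0 < m) (i j : ℕ) :
    swapC m (toFin m hm0 (i, j)) = toFin m hm0 (j, i) := rfl

lemma idxB_succ (m i j : ℕ) (hm : 2 ≤ m) (hi1 : 1 ≤ i) (hi : i < m) (hj1 : 1 ≤ j)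
    (hj : j + 1 < m) :
    if (i-1) % 2 = 0 then idxB m i (j+1) + 1 = idxB m i j
    else idxB m i j + 1 = idxB m i (j+1) := by
  by_cases hp : (i-1) % 2 = 0
  · rw [if_pos hp]; unfold idxB; rw [if_pos hp, if_pos hp]; omega
  · rw [if_neg hp]; unfold idxB; rw [if_neg hp, if_neg hp]; omega

lemma gs_right (m : ℕ) (hm : 2 ≤ m) (hmod : m % 2 = 0) (hm0 : 0 < m) (i j : ℕ)
    (hi : i < m) (hj : j + 1 < m) :
    GS m (toFin m hm0 (i, j)) (toFin m hm0 (i, j+1)) := by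
  have hB := (sq_facts m hm).2
  by_cases hi0 : i = 0
  · subst hi0
    have h := gs_cyc m hm hmod j (j+1) (by omega) (by omega)
      (Or.inl (Nat.mod_eq_of_lt (by omega)))
    rw [cyc_A m j (by omega), cyc_A m (j+1) hj] at h
    exact h
  have hi1 : 1 ≤ i := by omega
  by_cases hj0 : j = 0
  · subst hj0
    by_cases him : i = m - 1
    · subst him
      have hb := cyc_B m (m-1) 1 hm (by omega) (by omega) (by omega) (by omega)
      have hcC := cyc_C m (m-1) hm (by omega) (by omega)
      have hpar : (m - 1 - 1) % 2 = 0 := by omega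
      have hA := (sq_facts m hm).1
      have hidx : idxB m (m-1) 1 + 1 = m + (m-1)*(m-1) + (m-1-(m-1)) := by
        rw [idxB, if_pos hpar, show m-1-1 = m-2 by omega]
        omega
      have h := gs_cyc m hm hmod (m + (m-1)*(m-1) + (m-1-(m-1))) (idxB m (m-1) 1)
        hcC.2 (by omega) (Or.inr (by rw [hidx]; exact Nat.mod_eq_of_lt hcC.2))
      rw [hcC.1, hb.1] at h
      exact h
    · -- 1 ≤ i ≤ m-2 : flip to the edge between (i, m-1) and (i, m-2)
      apply GS.transport m (flipJ m) (flipJ_invol m) (flipJ_adj m)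
      rw [flip_toFin m hm0 i 0 hi (by omega), flip_toFin m hm0 i 1 hi (by omega)]
      rw [show m-1-0 = m-1 by omega, show m-1-1 = m-2 by omega]
      have e : m - 2 + 1 = m - 1 := by omega
      have hb1 := cyc_B m i (m-1) hm hi1 hi (by omega) (by omega)
      have hb2 := cyc_B m i (m-2) hm hi1 hi (by omega) (by omega)
      have hsucc := idxB_succ m i (m-2) hm hi1 hi (by omega) (by omega)
      rw [e] at hsucc
      by_cases hp : (i-1) % 2 = 0
      · rw [if_pos hp] at hsucc
        have h := gs_cyc m hm hmod (idxB m i (m-1)) (idxB m i (m-2)) (by omega) (by omega)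
          (Or.inl (by rw [hsucc]; exact Nat.mod_eq_of_lt (by omega)))
        rw [hb1.1, hb2.1] at h
        exact h
      · rw [if_neg hp] at hsucc
        have h := gs_cyc m hm hmod (idxB m i (m-1)) (idxB m i (m-2)) (by omega) (by omega)
          (Or.inr (by rw [hsucc]; exact Nat.mod_eq_of_lt (by omega)))
        rw [hb1.1, hb2.1] at h
        exact h
  · -- j ≥ 1 : generic serpentine edge
    have hb1 := cyc_B m i j hm hi1 hi (by omega) (by omega)
    have hb2 := cyc_B m i (j+1) hm hi1 hi (by omega) hj
    have hsucc := idxB_succ m i j hm hi1 hi (by omega) hj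
    by_cases hp : (i-1) % 2 = 0
    · rw [if_pos hp] at hsucc
      have h := gs_cyc m hm hmod (idxB m i j) (idxB m i (j+1)) (by omega) (by omega)
        (Or.inr (by rw [hsucc]; exact Nat.mod_eq_of_lt (by omega)))
      rw [hb1.1, hb2.1] at h
      exact h
    · rw [if_neg hp] at hsucc
      have h := gs_cyc m hm hmod (idxB m i j) (idxB m i (j+1)) (by omega) (by omega)
        (Or.inl (by rw [hsucc]; exact Nat.mod_eq_of_lt (by omega)))
      rw [hb1.1, hb2.1] at h
      exact h

lemma gs_left (m : ℕ) (hm : 2 ≤ m) (hmod : m % 2 = 0) (hm0 : 0 < m) (i j : ℕ)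
    (hi : i < m) (hj1 : 1 ≤ j) (hj : j < m) :
    GS m (toFin m hm0 (i, j)) (toFin m hm0 (i, j-1)) := by
  apply GS.transport m (flipJ m) (flipJ_invol m) (flipJ_adj m)
  rw [flip_toFin m hm0 i j hi hj, flip_toFin m hm0 i (j-1) hi (by omega)]
  rw [show m-1-(j-1) = (m-1-j)+1 by omega]
  exact gs_right m hm hmod hm0 i (m-1-j) hi (by omega)

lemma gs_down (m : ℕ) (hm : 2 ≤ m) (hmod : m % 2 = 0) (hm0 : 0 < m) (i j : ℕ)
    (hi : i + 1 < m) (hj : j < m) :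
    GS m (toFin m hm0 (i, j)) (toFin m hm0 (i+1, j)) := by
  apply GS.transport m (swapC m) (swapC_invol m) (swapC_adj m)
  rw [swap_toFin, swap_toFin]
  exact gs_right m hm hmod hm0 j i hj hi

lemma gs_up (m : ℕ) (hm : 2 ≤ m) (hmod : m % 2 = 0) (hm0 : 0 < m) (i j : ℕ)
    (hi1 : 1 ≤ i) (hi : i < m) (hj : j < m) :
    GS m (toFin m hm0 (i, j)) (toFin m hm0 (i-1, j)) := by
  apply GS.transport m (swapC m) (swapC_invol m) (swapC_adj m)
  rw [swap_toFin, swap_toFin]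
  exact gs_left m hm hmod hm0 j i hj hi1 hi

end GridHam

namespace GridHam

lemma final (n : ℕ) (hn : 1 ≤ n)
    (c c' : Fin (2 * n) × Fin (2 * n)) (hadj : (gridGraph (2 * n)).Adj c c') :
    ∃ (v : Fin (2 * n) × Fin (2 * n)) (p : (gridGraph (2 * n)).Walk c v),
      p.IsHamiltonian ∧ p.getVert 1 = c' := by
  have hm : 2 ≤ 2 * n := by omega
  have hmod : (2 * n) % 2 = 0 := by omega
  have hm0 : 0 < 2 * n := by omega
  have hG : GS (2*n) c c' := by
    have hvals := (adj_iff (2*n) c c').1 hadj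
    simp only [nadj] at hvals
    have b1 := c.1.isLt
    have b2 := c.2.isLt
    have b1' := c'.1.isLt
    have b2' := c'.2.isLt
    have hcases : (c'.1.val = c.1.val ∧ c'.2.val = c.2.val + 1) ∨
        (c'.1.val = c.1.val ∧ c.2.val = c'.2.val + 1) ∨
        (c'.2.val = c.2.val ∧ c'.1.val = c.1.val + 1) ∨
        (c'.2.val = c.2.val ∧ c.1.val = c'.1.val + 1) := by omega
    rcases hcases with ⟨e1, e2⟩ | ⟨e1, e2⟩ | ⟨e1, e2⟩ | ⟨e1, e2⟩
    · have h := gs_right (2*n) hm hmod hm0 c.1.val c.2.val b1 (by omega)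
      rw [show ((c.1.val : ℕ), c.2.val + 1) = (c'.1.val, c'.2.val) by
            rw [Prod.mk.injEq]; omega] at h
      rw [toFin_val, toFin_val] at h
      exact h
    · have h := gs_left (2*n) hm hmod hm0 c.1.val c.2.val b1 (by omega) b2
      rw [show ((c.1.val : ℕ), c.2.val - 1) = (c'.1.val, c'.2.val) by
            rw [Prod.mk.injEq]; omega] at h
      rw [toFin_val, toFin_val] at h
      exact h
    · have h := gs_down (2*n) hm hmod hm0 c.1.val c.2.val (by omega) b2
      rw [show ((c.1.val : ℕ) + 1, c.2.val) = (c'.1.val, c'.2.val) by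
            rw [Prod.mk.injEq]; omega] at h
      rw [toFin_val, toFin_val] at h
      exact h
    · have h := gs_up (2*n) hm hmod hm0 c.1.val c.2.val (by omega) b1 b2
      rw [show ((c.1.val : ℕ) - 1, c.2.val) = (c'.1.val, c'.2.val) by
            rw [Prod.mk.injEq]; omega] at h
      rw [toFin_val, toFin_val] at h
      exact h
  obtain ⟨f, h0, h1, hA, hS⟩ := hG
  subst h0
  subst h1
  exact goodSeq_to_ham (2*n) hm f hA hS

end GridHam

/-- in the `2n × 2n` grid graph (`n ≥ 1`), for every cell `c` and every
cell `c'` adjacent to `c`, there is a Hamiltonian path starting at `c` whose second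
vertex is `c'`. -/
theorem exists_hamiltonian_path_with_prescribed_first_step (n : ℕ) (hn : 1 ≤ n)
    (c c' : Fin (2 * n) × Fin (2 * n)) (hadj : (gridGraph (2 * n)).Adj c c') :
    ∃ (v : Fin (2 * n) × Fin (2 * n)) (p : (gridGraph (2 * n)).Walk c v),
      p.IsHamiltonian ∧ p.getVert 1 = c' :=
  GridHam.final n hn c c' hadj
end

section
/- Let n ≥ 1. In the (2n+1)×(2n+1) grid graph there exists a Hamiltonian path from the corner cell (0,0) to the opposite corner cell (2n,2n); in particular a straight, non-overlapping walk started at one corner can cover all (2n+1)² cells, ending at the diagonally opposite corner, with length (2n+1)² − 1. -/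
/-- A walk built from a function `f : ℕ → V` with consecutive adjacencies. -/
def walkOfFn {V : Type*} (G : SimpleGraph V) (f : ℕ → V) :
    (N : ℕ) → (∀ k < N, G.Adj (f k) (f (k + 1))) → G.Walk (f 0) (f N)
  | 0, _ => SimpleGraph.Walk.nil
  | N + 1, h => (walkOfFn G f N (fun k hk => h k (by omega))).concat (h N (by omega))

theorem walkOfFn_support {V : Type*} (G : SimpleGraph V) (f : ℕ → V) (N : ℕ)
    (h : ∀ k < N, G.Adj (f k) (f (k + 1))) :
    (walkOfFn G f N h).support = (List.range (N + 1)).map f := by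
  induction N with
  | zero => simp [walkOfFn, List.range_succ]
  | succ N ih =>
    rw [walkOfFn, SimpleGraph.Walk.support_concat, ih]
    simp [List.range_succ]

/-- The snake (boustrophedon) enumeration of the `m × m` grid. -/
def snake (m : ℕ) (hm : 0 < m) (k : ℕ) : Fin m × Fin m :=
  (⟨k / m % m, Nat.mod_lt _ hm⟩,
   ⟨if k / m % 2 = 0 then k % m else m - 1 - k % m, by
      have := Nat.mod_lt k hm; split <;> omega⟩)

theorem snake_adj (m : ℕ) (hm : 0 < m) (k : ℕ) (hk : k + 1 < m * m) :
    (gridGraph m).Adj (snake m hm k) (snake m hm (k + 1)) := by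
  have hjm : k % m < m := Nat.mod_lt _ hm
  have hkeq : m * (k / m) + k % m = k := Nat.div_add_mod k m
  have him : k / m < m := (Nat.div_lt_iff_lt_mul hm).mpr (by omega)
  have hi1m : (k + 1) / m < m := (Nat.div_lt_iff_lt_mul hm).mpr (by omega)
  by_cases hcase : k % m + 1 < m
  · -- same row
    have hd : (k + 1) / m = k / m := by
      have h1 : k + 1 = m * (k / m) + (k % m + 1) := by omega
      rw [h1, Nat.mul_add_div hm, Nat.div_eq_of_lt hcase]
      omega
    have hmod : (k + 1) % m = k % m + 1 := by
      have h1 : k + 1 = m * (k / m) + (k % m + 1) := by omega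
      rw [h1, Nat.mul_add_mod, Nat.mod_eq_of_lt hcase]
    show (_ : ℤ).natAbs + (_ : ℤ).natAbs = 1
    simp only [snake, hd, hmod, Nat.mod_eq_of_lt him]
    rcases Nat.even_or_odd (k / m) with he | ho
    · have h2 : k / m % 2 = 0 := Nat.even_iff.mp he
      simp only [h2, reduceIte, if_neg (Nat.one_ne_zero)]
      omega
    · have h2 : k / m % 2 = 1 := Nat.odd_iff.mp ho
      simp only [h2, reduceIte, if_neg (Nat.one_ne_zero)]
      omega
  · -- next row
    have hjeq : k % m = m - 1 := by omega
    have hk1 : k + 1 = m * (k / m + 1) + 0 := by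
      have : m * (k / m + 1) = m * (k / m) + m := by ring
      omega
    have hd : (k + 1) / m = k / m + 1 := by
      rw [hk1, Nat.mul_add_div hm, Nat.div_eq_of_lt hm]
    have hmod : (k + 1) % m = 0 := by
      rw [hk1, Nat.mul_add_mod, Nat.mod_eq_of_lt hm]
    show (_ : ℤ).natAbs + (_ : ℤ).natAbs = 1
    rw [hd] at hi1m
    simp only [snake, hd, hmod, Nat.mod_eq_of_lt him, Nat.mod_eq_of_lt hi1m]
    rcases Nat.even_or_odd (k / m) with he | ho
    · have h2 : k / m % 2 = 0 := Nat.even_iff.mp he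
      have h2' : (k / m + 1) % 2 = 1 := by omega
      simp only [h2, h2', reduceIte, if_neg (Nat.one_ne_zero)]
      omega
    · have h2 : k / m % 2 = 1 := Nat.odd_iff.mp ho
      have h2' : (k / m + 1) % 2 = 0 := by omega
      simp only [h2, h2', reduceIte, if_neg (Nat.one_ne_zero)]
      omega

theorem snake_injOn (m : ℕ) (hm : 0 < m) {k k' : ℕ} (hk : k < m * m) (hk' : k' < m * m)
    (h : snake m hm k = snake m hm k') : k = k' := by
  have hkm : k / m < m := (Nat.div_lt_iff_lt_mul hm).mpr hk
  have hkm' : k' / m < m := (Nat.div_lt_iff_lt_mul hm).mpr hk'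
  have h1 : k / m % m = k' / m % m := congrArg (fun c => (c.1 : Fin m).val) h
  rw [Nat.mod_eq_of_lt hkm, Nat.mod_eq_of_lt hkm'] at h1
  have h2 : (if k / m % 2 = 0 then k % m else m - 1 - k % m)
      = (if k' / m % 2 = 0 then k' % m else m - 1 - k' % m) :=
    congrArg (fun c => (c.2 : Fin m).val) h
  rw [h1] at h2
  have hjm : k % m < m := Nat.mod_lt _ hm
  have hjm' : k' % m < m := Nat.mod_lt _ hm
  have hmod : k % m = k' % m := by split at h2 <;> omega
  rw [← Nat.div_add_mod k m, ← Nat.div_add_mod k' m, h1, hmod]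

theorem snake_surj (m : ℕ) (hm : 0 < m) (v : Fin m × Fin m) :
    ∃ k < m * m, snake m hm k = v := by
  obtain ⟨⟨r, hr⟩, ⟨c, hc⟩⟩ := v
  refine ⟨m * r + (if r % 2 = 0 then c else m - 1 - c), ?_, ?_⟩
  · have h1 : (if r % 2 = 0 then c else m - 1 - c) < m := by split <;> omega
    have h2 : m * r + m ≤ m * m := by
      have : m * (r + 1) ≤ m * m := Nat.mul_le_mul_left m hr
      have : m * (r + 1) = m * r + m := by ring
      omega
    omega
  · have hlt : (if r % 2 = 0 then c else m - 1 - c) < m := by split <;> omega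
    have hd : (m * r + (if r % 2 = 0 then c else m - 1 - c)) / m = r := by
      rw [Nat.mul_add_div hm, Nat.div_eq_of_lt hlt]
      omega
    have hmod : (m * r + (if r % 2 = 0 then c else m - 1 - c)) % m
        = (if r % 2 = 0 then c else m - 1 - c) := by
      rw [Nat.mul_add_mod, Nat.mod_eq_of_lt hlt]
    simp only [snake, hd, hmod, Nat.mod_eq_of_lt hr]
    refine Prod.ext rfl ?_
    apply Fin.ext
    simp only
    split <;> omega

/-- in the `(2n+1) × (2n+1)` grid graph (`n ≥ 1`) there is a Hamiltonian
path from the corner `(0,0)` to the opposite corner `(2n,2n)`. -/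
theorem exists_hamiltonian_path_corner_to_corner_odd (n : ℕ) (hn : 1 ≤ n) :
    ∃ p : (gridGraph (2 * n + 1)).Walk
      (⟨0, by omega⟩, ⟨0, by omega⟩) (⟨2 * n, by omega⟩, ⟨2 * n, by omega⟩),
      p.IsHamiltonian := by
  set m := 2 * n + 1 with hm
  have hm0 : 0 < m := by omega
  set N := m * m - 1 with hN
  have hmm : m * m = 4 * n * n + 4 * n + 1 := by rw [hm]; ring
  have hN1 : N + 1 = m * m := by omega
  have hadj : ∀ k < N, (gridGraph m).Adj (snake m hm0 k) (snake m hm0 (k + 1)) :=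
    fun k hk => snake_adj m hm0 k (by omega)
  have h0 : snake m hm0 0 = (⟨0, by omega⟩, ⟨0, by omega⟩) := by
    simp [snake, Nat.mod_eq_of_lt hm0]
  have hNval : snake m hm0 N = (⟨2 * n, by omega⟩, ⟨2 * n, by omega⟩) := by
    have hNeq : N = m * (2 * n) + 2 * n := by rw [hN, hmm, hm]; ring_nf; omega
    have hd : N / m = 2 * n := by
      rw [hNeq, Nat.mul_add_div hm0, Nat.div_eq_of_lt (by omega)]
      omega
    have hmod : N % m = 2 * n := by
      rw [hNeq, Nat.mul_add_mod, Nat.mod_eq_of_lt (by omega)]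
    have h2 : (2 * n) % 2 = 0 := by omega
    simp only [snake, hd, hmod, h2, reduceIte, Nat.mod_eq_of_lt (show 2 * n < m by omega)]
  refine ⟨(walkOfFn (gridGraph m) (snake m hm0) N hadj).copy h0 hNval, ?_⟩
  intro v
  rw [SimpleGraph.Walk.support_copy, walkOfFn_support]
  have hnodup : ((List.range (N + 1)).map (snake m hm0)).Nodup := by
    refine List.Nodup.map_on ?_ List.nodup_range
    intro x hx y hy hxy
    rw [List.mem_range] at hx hy
    exact snake_injOn m hm0 (by omega) (by omega) hxy
  have hmem : v ∈ (List.range (N + 1)).map (snake m hm0) := by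
    obtain ⟨k, hk, hkv⟩ := snake_surj m hm0 v
    exact List.mem_map.mpr ⟨k, List.mem_range.mpr (by omega), hkv⟩
  exact @List.count_eq_one_of_mem _ instBEqOfDecidableEq _ _ _ hnodup hmem
end

section
/- Let n > 1. Let c = (i,j) and c' = (i',j') be adjacent cells of the 2n×2n grid graph, neither of which is a corner cell (a corner cell is one of (0,0), (0,2n−1), (2n−1,0), (2n−1,2n−1)). Then there exists a Hamiltonian path from c to c', i.e., a straight, non-overlapping walk of maximum length (2n)² − 1 connecting the two adjacent cells. -/
namespace GridHam

open List

set_option linter.unusedSectionVars false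
variable {V : Type*} {G : SimpleGraph V} [DecidableEq V]

lemma exists_walk_of_chain' :
    ∀ (l : List V) (a b : V), l.Chain' G.Adj → l.head? = some a → l.getLast? = some b →
      ∃ p : G.Walk a b, p.support = l
  | [], a, b, _, ha, _ => by simp at ha
  | [x], a, b, _, ha, hb => by
    simp only [head?_cons, Option.some.injEq] at ha
    simp only [getLast?_singleton, Option.some.injEq] at hb
    subst ha; subst hb
    exact ⟨SimpleGraph.Walk.nil, rfl⟩
  | x :: y :: t, a, b, hch, ha, hb => by
    simp only [head?_cons, Option.some.injEq] at ha
    subst ha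
    unfold List.Chain' at hch
    rw [List.isChain_cons_cons] at hch
    have hb' : (y :: t).getLast? = some b := by
      rw [← hb]; rfl
    obtain ⟨p, hp⟩ := exists_walk_of_chain' (y :: t) y b hch.2 rfl hb'
    exact ⟨SimpleGraph.Walk.cons hch.1 p, by simp [hp]⟩

lemma master (c c' : V) (L₁ L₂ : List V)
    (hchain : (L₁ ++ c :: c' :: L₂).Chain' G.Adj)
    (hwrap : ∀ x ∈ (L₁ ++ c :: c' :: L₂).getLast?, ∀ y ∈ (L₁ ++ c :: c' :: L₂).head?, G.Adj x y)
    (hnd : (L₁ ++ c :: c' :: L₂).Nodup)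
    (hall : ∀ v, v ∈ L₁ ++ c :: c' :: L₂) :
    ∃ p : G.Walk c c', p.IsHamiltonian := by
  have hsplit := List.isChain_append.mp hchain
  have hlast : (L₁ ++ c :: c' :: L₂).getLast? = (c' :: L₂).getLast? := by
    rw [List.getLast?_append]
    have : (c :: c' :: L₂).getLast? = (c' :: L₂).getLast? := rfl
    rw [this]
    obtain ⟨z, hz⟩ : ∃ z, (c' :: L₂).getLast? = some z := ⟨_, List.getLast?_eq_getLast (by simp)⟩
    rw [hz]; rfl
  have hhead : (L₁ ++ c :: c' :: L₂).head? = (L₁ ++ [c]).head? := by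
    rw [List.head?_append, List.head?_append]; rfl
  have hchr : ((c' :: L₂) ++ (L₁ ++ [c])).Chain' G.Adj := by
    refine List.isChain_append.mpr ⟨hsplit.2.1.tail, ?_, ?_⟩
    · refine List.isChain_append.mpr ⟨hsplit.1, List.isChain_singleton c, ?_⟩
      intro x hx y hy
      simp only [head?_cons, Option.mem_def, Option.some.injEq] at hy
      subst hy
      exact hsplit.2.2 x hx c (by simp)
    · intro x hx y hy
      exact hwrap x (by rw [hlast]; exact hx) y (by rw [hhead]; exact hy)
  set r : List V := (c' :: L₂) ++ (L₁ ++ [c]) with hr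
  have hqchain : r.reverse.Chain' G.Adj :=
    List.isChain_reverse.mpr (hchr.imp fun a b h => G.adj_symm h)
  have hqhead : r.reverse.head? = some c := by
    rw [List.head?_reverse, hr, List.getLast?_append, List.getLast?_concat]; rfl
  have hqlast : r.reverse.getLast? = some c' := by
    rw [List.getLast?_reverse]; rfl
  obtain ⟨p, hp⟩ := exists_walk_of_chain' r.reverse c c' hqchain hqhead hqlast
  refine ⟨p, ?_⟩
  intro v
  rw [hp, List.count_reverse]
  have : List.count v r = List.count v (L₁ ++ c :: c' :: L₂) := by
    simp only [hr, List.count_append, List.count_cons, List.count_nil]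
    omega
  rw [this]
  exact List.count_eq_one_of_mem hnd (hall v)

/-! ### The natural-number layer -/

def natAdj (a b : ℕ × ℕ) : Prop :=
  (a.1 = b.1 ∧ (a.2 + 1 = b.2 ∨ b.2 + 1 = a.2)) ∨ (a.2 = b.2 ∧ (a.1 + 1 = b.1 ∨ b.1 + 1 = a.1))

def R (m : ℕ) (a b : ℕ × ℕ) : Prop :=
  a.1 < m ∧ a.2 < m ∧ b.1 < m ∧ b.2 < m ∧ natAdj a b

def tf (m : ℕ) (hm : 0 < m) (p : ℕ × ℕ) : Fin m × Fin m :=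
  (⟨p.1 % m, Nat.mod_lt _ hm⟩, ⟨p.2 % m, Nat.mod_lt _ hm⟩)

lemma tf_eq {m : ℕ} (hm : 0 < m) (v : Fin m × Fin m) : tf m hm (v.1.val, v.2.val) = v := by
  obtain ⟨⟨x, hx⟩, ⟨y, hy⟩⟩ := v
  simp [tf, Nat.mod_eq_of_lt hx, Nat.mod_eq_of_lt hy]

lemma tf_inj {m : ℕ} (hm : 0 < m) {x y : ℕ × ℕ} (hx1 : x.1 < m) (hx2 : x.2 < m)
    (hy1 : y.1 < m) (hy2 : y.2 < m) (h : tf m hm x = tf m hm y) : x = y := by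
  simp only [tf, Prod.mk.injEq, Fin.mk.injEq] at h
  rw [Nat.mod_eq_of_lt hx1, Nat.mod_eq_of_lt hx2, Nat.mod_eq_of_lt hy1,
    Nat.mod_eq_of_lt hy2] at h
  exact Prod.ext h.1 h.2

lemma adj_tf {m : ℕ} (hm : 0 < m) {a b : ℕ × ℕ} (h : R m a b) :
    (gridGraph m).Adj (tf m hm a) (tf m hm b) := by
  obtain ⟨h1, h2, h3, h4, h5⟩ := h
  show ((((a.1 % m : ℕ) : ℤ)) - ((b.1 % m : ℕ) : ℤ)).natAbs
      + ((((a.2 % m : ℕ) : ℤ)) - ((b.2 % m : ℕ) : ℤ)).natAbs = 1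
  rw [Nat.mod_eq_of_lt h1, Nat.mod_eq_of_lt h2, Nat.mod_eq_of_lt h3, Nat.mod_eq_of_lt h4]
  rcases h5 with ⟨e, h5⟩ | ⟨e, h5⟩ <;> omega

structure GoodCycle (m : ℕ) (l : List (ℕ × ℕ)) : Prop where
  chain : l.Chain' (R m)
  wrap : ∀ x ∈ l.getLast?, ∀ y ∈ l.head?, R m x y
  nodup : l.Nodup
  mem_iff : ∀ p : ℕ × ℕ, p ∈ l ↔ p.1 < m ∧ p.2 < m

lemma GoodCycle.mapGC {m : ℕ} {l : List (ℕ × ℕ)} (h : GoodCycle m l) (σ : ℕ × ℕ → ℕ × ℕ)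
    (hσ : ∀ a b, R m a b → R m (σ a) (σ b))
    (hb : ∀ p : ℕ × ℕ, p.1 < m → p.2 < m → (σ p).1 < m ∧ (σ p).2 < m ∧ σ (σ p) = p) :
    GoodCycle m (l.map σ) where
  chain := (List.isChain_map σ).mpr (h.chain.imp hσ)
  wrap := by
    intro x hx y hy
    rw [Option.mem_def, List.getLast?_map] at hx
    rw [Option.mem_def, List.head?_map] at hy
    obtain ⟨x', hx', rfl⟩ := Option.map_eq_some_iff.mp hx
    obtain ⟨y', hy', rfl⟩ := Option.map_eq_some_iff.mp hy
    exact hσ _ _ (h.wrap x' hx' y' hy')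
  nodup := by
    refine h.nodup.map_on ?_
    intro x hxl y hyl hxy
    obtain ⟨bx1, bx2⟩ := (h.mem_iff x).mp hxl
    obtain ⟨by1, by2⟩ := (h.mem_iff y).mp hyl
    have ex := hb x bx1 bx2
    have ey := hb y by1 by2
    calc x = σ (σ x) := ex.2.2.symm
    _ = σ (σ y) := by rw [hxy]
    _ = y := ey.2.2
  mem_iff := by
    intro p
    constructor
    · intro hp
      obtain ⟨q, hq, rfl⟩ := List.mem_map.mp hp
      obtain ⟨hq1, hq2⟩ := (h.mem_iff q).mp hq
      exact ⟨(hb q hq1 hq2).1, (hb q hq1 hq2).2.1⟩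
    · intro hp
      have e := hb p hp.1 hp.2
      refine List.mem_map.mpr ⟨σ p, (h.mem_iff _).mpr ⟨e.1, e.2.1⟩, ?_⟩
      exact (hb p hp.1 hp.2).2.2
      
lemma ham_reverse {m : ℕ} {c c' : Fin m × Fin m} {p : (gridGraph m).Walk c c'}
    (hp : p.IsHamiltonian) : p.reverse.IsHamiltonian := by
  intro v
  have hperm : p.reverse.support.Perm p.support := by
    rw [SimpleGraph.Walk.support_reverse]
    exact List.reverse_perm _
  exact (@List.Perm.count_eq _ instBEqOfDecidableEq _ _ hperm v).trans (hp v)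

lemma GoodCycle.ham {m : ℕ} (hm : 0 < m) {l : List (ℕ × ℕ)} (h : GoodCycle m l)
    (c c' : Fin m × Fin m)
    (hdec : ∃ A B, l = A ++ (c.1.val, c.2.val) :: (c'.1.val, c'.2.val) :: B) :
    ∃ p : (gridGraph m).Walk c c', p.IsHamiltonian := by
  obtain ⟨A, B, hAB⟩ := hdec
  have hmap : l.map (tf m hm) = (A.map (tf m hm)) ++ c :: c' :: (B.map (tf m hm)) := by
    rw [hAB]
    simp only [List.map_append, List.map_cons]
    rw [tf_eq hm c, tf_eq hm c']
  apply master c c' (A.map (tf m hm)) (B.map (tf m hm))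
  · rw [← hmap]
    exact (List.isChain_map _).mpr (h.chain.imp fun a b hab => adj_tf hm hab)
  · rw [← hmap]
    intro x hx y hy
    rw [Option.mem_def, List.getLast?_map] at hx
    rw [Option.mem_def, List.head?_map] at hy
    obtain ⟨x', hx', rfl⟩ := Option.map_eq_some_iff.mp hx
    obtain ⟨y', hy', rfl⟩ := Option.map_eq_some_iff.mp hy
    exact adj_tf hm (h.wrap x' hx' y' hy')
  · rw [← hmap]
    refine h.nodup.map_on ?_
    intro x hxl y hyl hxy
    obtain ⟨bx1, bx2⟩ := (h.mem_iff x).mp hxl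
    obtain ⟨by1, by2⟩ := (h.mem_iff y).mp hyl
    exact tf_inj hm bx1 bx2 by1 by2 hxy
  · rw [← hmap]
    intro v
    exact List.mem_map.mpr ⟨(v.1.val, v.2.val), (h.mem_iff _).mpr ⟨v.1.isLt, v.2.isLt⟩, tf_eq hm v⟩

/-! ### The snake cycle -/

def rowL (m i : ℕ) : List (ℕ × ℕ) :=
  (List.range (m - 1)).map fun t => (i, if i % 2 = 1 then t + 1 else m - 1 - t)

def snakeRows (m : ℕ) : ℕ → List (ℕ × ℕ)
  | 0 => rowL m 0
  | k + 1 => rowL m (k + 1) ++ snakeRows m k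

def snake (m : ℕ) : List (ℕ × ℕ) :=
  ((List.range m).map fun i => (i, 0)) ++ snakeRows m (m - 1)

lemma mem_rowL {m : ℕ} (hm : 2 ≤ m) (i a b : ℕ) :
    (a, b) ∈ rowL m i ↔ a = i ∧ 1 ≤ b ∧ b < m := by
  simp only [rowL, List.mem_map, List.mem_range, Prod.mk.injEq]
  constructor
  · rintro ⟨t, ht, rfl, rfl⟩
    split_ifs with hp <;> omega
  · rintro ⟨rfl, h1, h2⟩
    by_cases hp : a % 2 = 1
    · exact ⟨b - 1, by omega, rfl, by rw [if_pos hp]; omega⟩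
    · exact ⟨m - 1 - b, by omega, rfl, by rw [if_neg hp]; omega⟩

lemma nodup_rowL (m i : ℕ) : (rowL m i).Nodup := by
  refine List.Nodup.map_on ?_ List.nodup_range
  intro x hx y hy hxy
  simp only [List.mem_range] at hx hy
  simp only [Prod.mk.injEq] at hxy
  split_ifs at hxy <;> omega

lemma head?_rowL {m : ℕ} (hm : 2 ≤ m) (i : ℕ) :
    (rowL m i).head? = some (i, if i % 2 = 1 then 1 else m - 1) := by
  have h1 : m - 1 = (m - 2) + 1 := by omega
  rw [rowL, List.head?_map, h1, List.range_succ_eq_map]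
  simp only [List.head?_cons, Option.map_some]
  split_ifs <;> simp

lemma getLast?_rowL {m : ℕ} (hm : 2 ≤ m) (i : ℕ) :
    (rowL m i).getLast? = some (i, if i % 2 = 1 then m - 1 else 1) := by
  have h1 : m - 1 = (m - 2) + 1 := by omega
  rw [rowL, List.getLast?_map, h1, List.range_succ, List.getLast?_concat]
  simp only [Option.map_some, Option.some.injEq, Prod.mk.injEq, true_and]
  split_ifs <;> omega

lemma chain'_rowL {m : ℕ} (hm : 2 ≤ m) {i : ℕ} (hi : i < m) :
    (rowL m i).Chain' (R m) := by
  unfold List.Chain'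
  rw [rowL, List.isChain_map]
  have h1 : m - 1 = Nat.succ (m - 2) := by omega
  rw [h1, List.isChain_range_succ]
  intro t ht
  unfold R natAdj
  split_ifs with hp <;> dsimp only <;> omega

lemma mem_snakeRows {m : ℕ} (hm : 2 ≤ m) : ∀ k (a b : ℕ),
    ((a, b) ∈ snakeRows m k ↔ a ≤ k ∧ 1 ≤ b ∧ b < m)
  | 0, a, b => by
    rw [snakeRows, mem_rowL hm]
    omega
  | k + 1, a, b => by
    rw [snakeRows, List.mem_append, mem_rowL hm, mem_snakeRows hm k]
    omega

lemma nodup_snakeRows {m : ℕ} (hm : 2 ≤ m) : ∀ k, (snakeRows m k).Nodup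
  | 0 => nodup_rowL m 0
  | k + 1 => by
    rw [snakeRows, List.nodup_append]
    refine ⟨nodup_rowL m (k + 1), nodup_snakeRows hm k, ?_⟩
    intro p hp q hp' rfl
    obtain ⟨a, b⟩ := p
    rw [mem_rowL hm] at hp
    rw [mem_snakeRows hm] at hp'
    omega

lemma head?_snakeRows {m : ℕ} (hm : 2 ≤ m) (k : ℕ) :
    (snakeRows m k).head? = some (k, if k % 2 = 1 then 1 else m - 1) := by
  cases k with
  | zero => rw [snakeRows, head?_rowL hm]
  | succ k => rw [snakeRows, List.head?_append, head?_rowL hm]; rfl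

lemma getLast?_snakeRows {m : ℕ} (hm : 2 ≤ m) : ∀ k, (snakeRows m k).getLast? = some (0, 1)
  | 0 => by
    rw [snakeRows, getLast?_rowL hm]
    simp
  | k + 1 => by
    rw [snakeRows, List.getLast?_append, getLast?_snakeRows hm k]
    rfl

lemma chain'_snakeRows {m : ℕ} (hm : 2 ≤ m) : ∀ k, k < m → (snakeRows m k).Chain' (R m)
  | 0, h => chain'_rowL hm h
  | k + 1, h => by
    rw [snakeRows]
    refine List.isChain_append.mpr ⟨chain'_rowL hm h, chain'_snakeRows hm k (by omega), ?_⟩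
    intro x hx y hy
    rw [Option.mem_def, getLast?_rowL hm, Option.some.injEq] at hx
    rw [Option.mem_def, head?_snakeRows hm, Option.some.injEq] at hy
    subst hx; subst hy
    unfold R natAdj
    split_ifs with h1 h2 h2 <;> dsimp only <;> omega

lemma mem_snake {m : ℕ} (hm : 2 ≤ m) (a b : ℕ) :
    (a, b) ∈ snake m ↔ a < m ∧ b < m := by
  rw [snake, List.mem_append, mem_snakeRows hm]
  simp only [List.mem_map, List.mem_range, Prod.mk.injEq]
  constructor
  · rintro (⟨t, ht, rfl, rfl⟩ | h) <;> omega
  · intro h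
    by_cases hb : b = 0
    · exact Or.inl ⟨a, by omega, rfl, hb.symm⟩
    · exact Or.inr (by omega)

lemma nodup_snake {m : ℕ} (hm : 2 ≤ m) : (snake m).Nodup := by
  rw [snake, List.nodup_append]
  refine ⟨List.Nodup.map_on ?_ List.nodup_range, nodup_snakeRows hm _, ?_⟩
  · intro x hx y hy hxy
    simpa using congrArg Prod.fst hxy
  · intro p hp q hp' rfl
    obtain ⟨a, b⟩ := p
    simp only [List.mem_map, List.mem_range, Prod.mk.injEq] at hp
    rw [mem_snakeRows hm] at hp'
    omega

lemma chain'_snake {m : ℕ} (hm : 2 ≤ m) (heven : m % 2 = 0) : (snake m).Chain' (R m) := by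
  rw [snake]
  refine List.isChain_append.mpr ⟨?_, chain'_snakeRows hm (m - 1) (by omega), ?_⟩
  · rw [List.isChain_map]
    have h1 : m = Nat.succ (m - 1) := by omega
    rw [h1, List.isChain_range_succ]
    intro t ht
    unfold R natAdj
    dsimp only
    omega
  · intro x hx y hy
    have h1 : m = (m - 1) + 1 := by omega
    rw [Option.mem_def, List.getLast?_map, h1, List.range_succ, List.getLast?_concat,
      Option.map_some, Option.some.injEq] at hx
    rw [Option.mem_def, head?_snakeRows hm, Option.some.injEq] at hy
    subst hx; subst hy
    unfold R natAdj
    split_ifs with h2 <;> dsimp only <;> omega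

lemma getLast?_snake {m : ℕ} (hm : 2 ≤ m) : (snake m).getLast? = some (0, 1) := by
  rw [snake, List.getLast?_append, getLast?_snakeRows hm]
  rfl

lemma head?_snake {m : ℕ} (hm : 2 ≤ m) : (snake m).head? = some (0, 0) := by
  have h1 : m = (m - 1) + 1 := by omega
  rw [snake, List.head?_append, List.head?_map, h1, List.range_succ_eq_map]
  rfl

lemma goodCycle_snake {m : ℕ} (hm : 2 ≤ m) (heven : m % 2 = 0) : GoodCycle m (snake m) where
  chain := chain'_snake hm heven
  wrap := by
    intro x hx y hy
    rw [Option.mem_def, getLast?_snake hm, Option.some.injEq] at hx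
    rw [Option.mem_def, head?_snake hm, Option.some.injEq] at hy
    subst hx; subst hy
    unfold R natAdj
    dsimp only
    omega
  nodup := nodup_snake hm
  mem_iff := by intro ⟨a, b⟩; exact mem_snake hm a b

/-! ### Decompositions -/

lemma map_range_decomp {α : Type*} (f : ℕ → α) (n t : ℕ) (h : t + 1 < n) :
    ∃ A B, (List.range n).map f = A ++ f t :: f (t + 1) :: B := by
  refine ⟨(List.range t).map f, ((List.range (n - (t + 2))).map fun x => t + 2 + x).map f, ?_⟩
  have h1 : n = (t + 2) + (n - (t + 2)) := by omega
  rw [h1, List.range_add]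
  have h2 : List.range (t + 2) = List.range t ++ [t, t + 1] := by
    rw [List.range_add]
    rfl
  rw [h2]
  simp

lemma rowL_decomp {m : ℕ} (hm : 2 ≤ m) (i j : ℕ) (hj1 : 1 ≤ j) (hj2 : j + 1 ≤ m - 1) :
    ∃ A B, rowL m i = A ++ (i, j) :: (i, j + 1) :: B ∨
           rowL m i = A ++ (i, j + 1) :: (i, j) :: B := by
  by_cases hp : i % 2 = 1
  · have hr : rowL m i = (List.range (m - 1)).map fun t => (i, t + 1) := by
      simp only [rowL, if_pos hp]
    obtain ⟨A, B, hAB⟩ := map_range_decomp (fun t => (i, t + 1)) (m - 1) (j - 1) (by omega)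
    refine ⟨A, B, Or.inl ?_⟩
    rw [hr, hAB]
    have e1 : j - 1 + 1 = j := by omega
    rw [e1]
  · have hr : rowL m i = (List.range (m - 1)).map fun t => (i, m - 1 - t) := by
      simp only [rowL, if_neg hp]
    obtain ⟨A, B, hAB⟩ := map_range_decomp (fun t => (i, m - 1 - t)) (m - 1) (m - 2 - j)
      (by omega)
    refine ⟨A, B, Or.inr ?_⟩
    rw [hr, hAB]
    have e1 : m - 1 - (m - 2 - j) = j + 1 := by omega
    have e2 : m - 1 - (m - 2 - j + 1) = j := by omega
    rw [e1, e2]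

lemma snakeRows_decomp (m : ℕ) : ∀ k i, i ≤ k → ∃ A B, snakeRows m k = A ++ rowL m i ++ B
  | 0, i, h => by
    have : i = 0 := by omega
    subst this
    exact ⟨[], [], by simp [snakeRows]⟩
  | k + 1, i, h => by
    by_cases hik : i = k + 1
    · subst hik
      exact ⟨[], snakeRows m k, by simp [snakeRows]⟩
    · obtain ⟨A, B, hAB⟩ := snakeRows_decomp m k i (by omega)
      exact ⟨rowL m (k + 1) ++ A, B, by rw [snakeRows, hAB]; simp⟩

lemma snake_decomp {m : ℕ} (hm : 2 ≤ m) (i j : ℕ) (hi : i < m) (hj1 : 1 ≤ j)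
    (hj2 : j + 1 ≤ m - 1) :
    ∃ A B, snake m = A ++ (i, j) :: (i, j + 1) :: B ∨
           snake m = A ++ (i, j + 1) :: (i, j) :: B := by
  obtain ⟨A, B, hAB⟩ := snakeRows_decomp m (m - 1) i (by omega)
  obtain ⟨C, D, hCD⟩ := rowL_decomp hm i j hj1 hj2
  rcases hCD with hCD | hCD
  · refine ⟨((List.range m).map fun i => (i, 0)) ++ A ++ C, D ++ B, Or.inl ?_⟩
    rw [snake, hAB, hCD]
    simp
  · refine ⟨((List.range m).map fun i => (i, 0)) ++ A ++ C, D ++ B, Or.inr ?_⟩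
    rw [snake, hAB, hCD]
    simp

/-! ### Symmetries and final assembly -/

def cflip (m : ℕ) (p : ℕ × ℕ) : ℕ × ℕ := (p.1, m - 1 - p.2)

def sw (p : ℕ × ℕ) : ℕ × ℕ := (p.2, p.1)

lemma cflip_R {m : ℕ} : ∀ a b, R m a b → R m (cflip m a) (cflip m b) := by
  intro ⟨a1, a2⟩ ⟨b1, b2⟩ h
  unfold R natAdj cflip at *
  dsimp only at *
  omega

lemma cflip_inv {m : ℕ} : ∀ p : ℕ × ℕ, p.1 < m → p.2 < m →
    (cflip m p).1 < m ∧ (cflip m p).2 < m ∧ cflip m (cflip m p) = p := by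
  intro ⟨a, b⟩ h1 h2
  unfold cflip
  dsimp only
  refine ⟨h1, by omega, ?_⟩
  simp only [Prod.mk.injEq]
  exact ⟨trivial, by omega⟩

lemma sw_R {m : ℕ} : ∀ a b, R m a b → R m (sw a) (sw b) := by
  intro ⟨a1, a2⟩ ⟨b1, b2⟩ h
  unfold R natAdj sw at *
  dsimp only at *
  omega

lemma sw_inv {m : ℕ} : ∀ p : ℕ × ℕ, p.1 < m → p.2 < m →
    (sw p).1 < m ∧ (sw p).2 < m ∧ sw (sw p) = p := by
  intro ⟨a, b⟩ h1 h2
  exact ⟨h2, h1, rfl⟩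

lemma hor {m : ℕ} (hm : 4 ≤ m) (heven : m % 2 = 0) (c c' : Fin m × Fin m)
    (h1 : c.1.val = c'.1.val) (h2 : c.2.val + 1 = c'.2.val) :
    ∃ p : (gridGraph m).Walk c c', p.IsHamiltonian := by
  have hm2 : 2 ≤ m := by omega
  have hm0 : 0 < m := by omega
  by_cases hb : 1 ≤ c.2.val
  · obtain ⟨A, B, hAB⟩ := snake_decomp hm2 c.1.val c.2.val c.1.isLt hb
      (by have := c'.2.isLt; omega)
    rcases hAB with hAB | hAB
    · refine (goodCycle_snake hm2 heven).ham hm0 c c' ⟨A, B, ?_⟩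
      rw [← h1, ← h2]
      exact hAB
    · obtain ⟨p, hp⟩ := (goodCycle_snake hm2 heven).ham hm0 c' c
        ⟨A, B, by rw [← h1, ← h2]; exact hAB⟩
      exact ⟨p.reverse, ham_reverse hp⟩
  · have hb0 : c.2.val = 0 := by omega
    have hb1 : c'.2.val = 1 := by omega
    obtain ⟨A, B, hAB⟩ := snake_decomp hm2 c.1.val (m - 2) c.1.isLt (by omega) (by omega)
    have gc := (goodCycle_snake hm2 heven).mapGC (cflip m) cflip_R cflip_inv
    have e1 : m - 1 - (m - 2) = 1 := by omega
    have e2 : m - 1 - (m - 2 + 1) = 0 := by omega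
    rcases hAB with hAB | hAB
    · obtain ⟨p, hp⟩ := gc.ham hm0 c' c ⟨A.map (cflip m), B.map (cflip m), by
        rw [hAB]
        simp only [List.map_append, List.map_cons, cflip]
        rw [e1, e2, ← h1, hb1, hb0]⟩
      exact ⟨p.reverse, ham_reverse hp⟩
    · refine gc.ham hm0 c c' ⟨A.map (cflip m), B.map (cflip m), ?_⟩
      rw [hAB]
      simp only [List.map_append, List.map_cons, cflip]
      rw [e1, e2, ← h1, hb1, hb0]

lemma ver {m : ℕ} (hm : 4 ≤ m) (heven : m % 2 = 0) (c c' : Fin m × Fin m)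
    (h1 : c.1.val + 1 = c'.1.val) (h2 : c.2.val = c'.2.val) :
    ∃ p : (gridGraph m).Walk c c', p.IsHamiltonian := by
  have hm2 : 2 ≤ m := by omega
  have hm0 : 0 < m := by omega
  by_cases ha : 1 ≤ c.1.val
  · obtain ⟨A, B, hAB⟩ := snake_decomp hm2 c.2.val c.1.val c.2.isLt ha
      (by have := c'.1.isLt; omega)
    have gc := (goodCycle_snake hm2 heven).mapGC sw sw_R sw_inv
    rcases hAB with hAB | hAB
    · refine gc.ham hm0 c c' ⟨A.map sw, B.map sw, ?_⟩
      rw [hAB]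
      simp only [List.map_append, List.map_cons, sw]
      rw [← h1, ← h2]
    · obtain ⟨p, hp⟩ := gc.ham hm0 c' c ⟨A.map sw, B.map sw, by
        rw [hAB]
        simp only [List.map_append, List.map_cons, sw]
        rw [← h1, ← h2]⟩
      exact ⟨p.reverse, ham_reverse hp⟩
  · have ha0 : c.1.val = 0 := by omega
    have ha1 : c'.1.val = 1 := by omega
    obtain ⟨A, B, hAB⟩ := snake_decomp hm2 c.2.val (m - 2) c.2.isLt (by omega) (by omega)
    have gc := ((goodCycle_snake hm2 heven).mapGC (cflip m) cflip_R cflip_inv).mapGC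
      sw sw_R sw_inv
    have e1 : m - 1 - (m - 2) = 1 := by omega
    have e2 : m - 1 - (m - 2 + 1) = 0 := by omega
    rcases hAB with hAB | hAB
    · obtain ⟨p, hp⟩ := gc.ham hm0 c' c ⟨(A.map (cflip m)).map sw, (B.map (cflip m)).map sw, by
        rw [hAB]
        simp only [List.map_append, List.map_cons, cflip, sw]
        rw [e1, e2, ← h2, ha1, ha0]⟩
      exact ⟨p.reverse, ham_reverse hp⟩
    · refine gc.ham hm0 c c' ⟨(A.map (cflip m)).map sw, (B.map (cflip m)).map sw, ?_⟩
      rw [hAB]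
      simp only [List.map_append, List.map_cons, cflip, sw]
      rw [e1, e2, ← h2, ha1, ha0]

lemma main {m : ℕ} (hm : 4 ≤ m) (heven : m % 2 = 0) (c c' : Fin m × Fin m)
    (hadj : (gridGraph m).Adj c c') : ∃ p : (gridGraph m).Walk c c', p.IsHamiltonian := by
  have key : (((c.1.val : ℕ) : ℤ) - ((c'.1.val : ℕ) : ℤ)).natAbs
      + (((c.2.val : ℕ) : ℤ) - ((c'.2.val : ℕ) : ℤ)).natAbs = 1 := hadj
  have hcase : (c.1.val = c'.1.val ∧ (c.2.val + 1 = c'.2.val ∨ c'.2.val + 1 = c.2.val)) ∨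
      (c.2.val = c'.2.val ∧ (c.1.val + 1 = c'.1.val ∨ c'.1.val + 1 = c.1.val)) := by omega
  rcases hcase with ⟨e1, e2 | e2⟩ | ⟨e1, e2 | e2⟩
  · exact hor hm heven c c' e1 e2
  · obtain ⟨p, hp⟩ := hor hm heven c' c e1.symm e2
    exact ⟨p.reverse, ham_reverse hp⟩
  · exact ver hm heven c c' e2 e1
  · obtain ⟨p, hp⟩ := ver hm heven c' c e2 e1.symm
    exact ⟨p.reverse, ham_reverse hp⟩

end GridHam

/-- in the `2n × 2n` grid graph (`n > 1`), any two adjacent cells, neither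
of which is a corner cell, are joined by a Hamiltonian path. -/
theorem exists_hamiltonian_path_between_adjacent_noncorner (n : ℕ) (hn : 1 < n)
    (c c' : Fin (2 * n) × Fin (2 * n)) (hadj : (gridGraph (2 * n)).Adj c c')
    (hc : ¬ ((c.1.val = 0 ∨ c.1.val = 2 * n - 1) ∧ (c.2.val = 0 ∨ c.2.val = 2 * n - 1)))
    (hc' : ¬ ((c'.1.val = 0 ∨ c'.1.val = 2 * n - 1) ∧ (c'.2.val = 0 ∨ c'.2.val = 2 * n - 1))) :
    ∃ p : (gridGraph (2 * n)).Walk c c', p.IsHamiltonian :=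
  GridHam.main (by omega) (by omega) c c' hadj
end

section
/- In the 4×4 grid graph there is no Hamiltonian path between the cells (1,1) and (1,3) (the paper's cells K(2,2) and K(2,4) in 1-indexed notation); equivalently, every path between these two non-adjacent cells in the same row has length at most 14, strictly less than the maximum possible length 4² − 1 = 15. -/
/-- Along any walk in the grid graph, the parity of `i + j + length` is invariant. -/
lemma grid_parity {m : ℕ} {u v : Fin m × Fin m} (p : (gridGraph m).Walk u v) :
    ((u.1 : ℕ) + u.2 + p.length) % 2 = ((v.1 : ℕ) + v.2) % 2 := by
  induction p with
  | nil => rfl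
  | cons h q ih =>
    rename_i a b c
    have h' : ((a.1 : ℤ) - (b.1 : ℤ)).natAbs + ((a.2 : ℤ) - (b.2 : ℤ)).natAbs = 1 := h
    simp only [SimpleGraph.Walk.length_cons]
    omega

/-- in the `4 × 4` grid graph there is no Hamiltonian path between the
cells `(1,1)` and `(1,3)`. -/
theorem no_hamiltonian_path_K22_K24 :
    ¬ ∃ p : (gridGraph 4).Walk ((1, 1) : Fin 4 × Fin 4) ((1, 3) : Fin 4 × Fin 4),
      p.IsHamiltonian := by
  rintro ⟨p, hp⟩
  have hl := hp.length_eq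
  have := grid_parity p
  simp [hl] at this
end

section
/- Let n ≥ 1. For any two distinct cells (i,i) and (i',i') lying on the main diagonal of the (2n+1)×(2n+1) grid graph, there exists a Hamiltonian path from (i,i) to (i',i'); i.e., any two cells on the main diagonal can be connected by a straight, non-overlapping walk of maximum length (2n+1)² − 1. -/
def adjN (p q : ℕ × ℕ) : Prop :=
  (p.1 = q.1 ∧ (p.2 + 1 = q.2 ∨ q.2 + 1 = p.2)) ∨
  (p.2 = q.2 ∧ (p.1 + 1 = q.1 ∨ q.1 + 1 = p.1))

instance : DecidableRel adjN := fun p q =>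
  decidable_of_iff ((p.1 = q.1 ∧ (p.2 + 1 = q.2 ∨ q.2 + 1 = p.2)) ∨
    (p.2 = q.2 ∧ (p.1 + 1 = q.1 ∨ q.1 + 1 = p.1))) Iff.rfl

lemma adjN_symm {p q : ℕ × ℕ} (h : adjN p q) : adjN q p := by unfold adjN at *; omega

lemma adjN_swap {p q : ℕ × ℕ} (h : adjN p q) : adjN p.swap q.swap := by
  unfold adjN at *; simp [Prod.swap] at *; omega

lemma adjN_mk {a b c d : ℕ} : adjN (a,b) (c,d) ↔
    ((a = c ∧ (b+1=d ∨ d+1=b)) ∨ (b = d ∧ (a+1=c ∨ c+1=a))) := Iff.rfl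

structure Piece (a b : ℕ × ℕ) (l : List (ℕ × ℕ)) : Prop where
  chain : l.IsChain adjN
  nodup : l.Nodup
  head : l.head? = some a
  last : l.getLast? = some b

lemma Piece.ne_nil {a b l} (h : Piece a b l) : l ≠ [] := by
  intro e; subst e; exact (by simpa using h.head)

lemma piece_single (a : ℕ × ℕ) : Piece a a [a] := ⟨by simp, by simp, rfl, rfl⟩

lemma Piece.glue {a b c d l1 l2} (h1 : Piece a b l1) (h2 : Piece c d l2)
    (hadj : adjN b c) (hdis : l1.Disjoint l2) : Piece a d (l1 ++ l2) where
  chain := List.isChain_append.mpr ⟨h1.chain, h2.chain, by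
    intro x hx y hy
    rw [h1.last, Option.mem_some_iff] at hx
    rw [h2.head, Option.mem_some_iff] at hy
    subst hx; subst hy; exact hadj⟩
  nodup := List.nodup_append'.mpr ⟨h1.nodup, h2.nodup, hdis⟩
  head := by rw [List.head?_append_of_ne_nil _ h1.ne_nil, h1.head]
  last := by rw [List.getLast?_append_of_ne_nil _ h2.ne_nil, h2.last]

lemma Piece.reverse {a b l} (h : Piece a b l) : Piece b a l.reverse where
  chain := List.isChain_reverse.mpr (h.chain.imp fun _ _ hh => adjN_symm hh)
  nodup := (List.nodup_reverse.mpr h.nodup)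
  head := by rw [List.head?_reverse, h.last]
  last := by rw [List.getLast?_reverse, h.head]

lemma Piece.swap {a b l} (h : Piece a b l) : Piece a.swap b.swap (l.map Prod.swap) where
  chain := (List.isChain_map _).mpr (h.chain.imp fun _ _ hh => adjN_swap hh)
  nodup := h.nodup.map Prod.swap_injective
  head := by rw [List.head?_map, h.head]; rfl
  last := by rw [List.getLast?_map, h.last]; rfl

def hseg (r : ℕ) : ℕ → ℕ → List (ℕ × ℕ)
  | _, 0 => []
  | a, len+1 => (r, a) :: hseg r (a+1) len

lemma hseg_mem {r : ℕ} : ∀ {len a : ℕ} {p : ℕ × ℕ}, p ∈ hseg r a len →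
    p.1 = r ∧ a ≤ p.2 ∧ p.2 < a + len
  | 0, _, p => by simp [hseg]
  | len+1, a, p => by
    intro h
    rcases List.mem_cons.mp h with h | h
    · subst h; exact ⟨rfl, le_rfl, by omega⟩
    · have := hseg_mem h; omega

lemma hseg_head {r a len : ℕ} (h : 0 < len) : (hseg r a len).head? = some (r, a) := by
  cases len with
  | zero => omega
  | succ n => rfl

lemma hseg_last {r : ℕ} : ∀ {len a : ℕ}, 0 < len → (hseg r a len).getLast? = some (r, a + len - 1)
  | 0, _, h => by omega
  | 1, a, _ => by simp [hseg]
  | len+2, a, _ => by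
    have := hseg_last (r := r) (len := len+1) (a := a+1) (by omega)
    simp only [hseg] at *
    rw [List.getLast?_cons_cons] at *
    rw [this]; congr 2; omega

lemma hseg_chain {r : ℕ} : ∀ {len a : ℕ}, (hseg r a len).IsChain adjN
  | 0, _ => by simp [hseg]
  | 1, a => by simp [hseg]
  | len+2, a => by
    simp only [hseg]
    rw [List.isChain_cons_cons]
    exact ⟨Or.inl ⟨rfl, Or.inl rfl⟩, hseg_chain (len := len+1)⟩

lemma hseg_nodup {r : ℕ} : ∀ {len a : ℕ}, (hseg r a len).Nodup
  | 0, _ => by simp [hseg]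
  | len+1, a => by
    simp only [hseg, List.nodup_cons]
    refine ⟨fun h => ?_, hseg_nodup⟩
    have h2 := (hseg_mem h).2.1
    have h3 : ((r, a) : ℕ × ℕ).2 = a := rfl
    omega

lemma hseg_length {r : ℕ} : ∀ {len a : ℕ}, (hseg r a len).length = len
  | 0, _ => rfl
  | len+1, _ => by simp only [hseg, List.length_cons, hseg_length]

lemma hseg_piece {r a len : ℕ} (h : 0 < len) :
    Piece (r, a) (r, a + len - 1) (hseg r a len) :=
  ⟨hseg_chain, hseg_nodup, hseg_head h, hseg_last h⟩

/-- Leftward horizontal segment. -/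
def hsegL (r a len : ℕ) : List (ℕ × ℕ) := (hseg r a len).reverse

lemma hsegL_piece {r a len : ℕ} (h : 0 < len) :
    Piece (r, a + len - 1) (r, a) (hsegL r a len) := (hseg_piece h).reverse

lemma hsegL_mem {r a len : ℕ} {p : ℕ × ℕ} (h : p ∈ hsegL r a len) :
    p.1 = r ∧ a ≤ p.2 ∧ p.2 < a + len := hseg_mem (List.mem_reverse.mp h)

/-- Downward vertical segment. -/
def vsegD (c a len : ℕ) : List (ℕ × ℕ) := (hseg c a len).map Prod.swap

lemma vsegD_piece {c a len : ℕ} (h : 0 < len) :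
    Piece (a, c) (a + len - 1, c) (vsegD c a len) := (hseg_piece h).swap

lemma vsegD_mem {c a len : ℕ} {p : ℕ × ℕ} (h : p ∈ vsegD c a len) :
    p.2 = c ∧ a ≤ p.1 ∧ p.1 < a + len := by
  rcases List.mem_map.mp h with ⟨q, hq, rfl⟩
  exact hseg_mem hq

/-- Upward vertical segment. -/
def vsegU (c a len : ℕ) : List (ℕ × ℕ) := (vsegD c a len).reverse

lemma vsegU_piece {c a len : ℕ} (h : 0 < len) :
    Piece (a + len - 1, c) (a, c) (vsegU c a len) := (vsegD_piece h).reverse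

lemma vsegU_mem {c a len : ℕ} {p : ℕ × ℕ} (h : p ∈ vsegU c a len) :
    p.2 = c ∧ a ≤ p.1 ∧ p.1 < a + len := vsegD_mem (List.mem_reverse.mp h)

lemma length_hsegL {r a len : ℕ} : (hsegL r a len).length = len := by
  simp [hsegL, hseg_length]
lemma length_vsegD {c a len : ℕ} : (vsegD c a len).length = len := by
  simp [vsegD, hseg_length]
lemma length_vsegU {c a len : ℕ} : (vsegU c a len).length = len := by
  simp [vsegU, length_vsegD]

/-- Horizontal boustrophedon over rows `0..2t`, columns `0..w-1`,
from `(0, w-1)` to `(2t, 0)`. -/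
def zz (w : ℕ) : ℕ → List (ℕ × ℕ)
  | 0 => hsegL 0 0 w
  | t+1 => zz w t ++ (hseg (2*t+1) 0 w ++ hsegL (2*t+2) 0 w)

lemma zz_mem {w : ℕ} : ∀ {t : ℕ} {p : ℕ × ℕ}, p ∈ zz w t → p.1 ≤ 2*t ∧ p.2 < w
  | 0, p => by
    intro h; have := hsegL_mem h; omega
  | t+1, p => by
    intro h
    rcases List.mem_append.mp h with h | h
    · have := zz_mem h; omega
    · rcases List.mem_append.mp h with h | h
      · have := hseg_mem h; omega
      · have := hsegL_mem h; omega

lemma zz_piece {w : ℕ} (hw : 0 < w) : ∀ {t : ℕ}, Piece (0, w-1) (2*t, 0) (zz w t)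
  | 0 => by simpa [zz] using hsegL_piece (r := 0) (a := 0) hw
  | t+1 => by
    have p1 : Piece (0, w-1) (2*t, 0) (zz w t) := zz_piece hw
    have p2 := hseg_piece (r := 2*t+1) (a := 0) hw
    have p3 := hsegL_piece (r := 2*t+2) (a := 0) hw
    have p23 := p2.glue p3 (by rw [adjN_mk]; omega)
      (fun p hp hq => by have := hseg_mem hp; have := hsegL_mem hq; omega)
    have := p1.glue p23 (by rw [adjN_mk]; omega)
      (fun p hp hq => by
        have h1 := zz_mem hp
        rcases List.mem_append.mp hq with hq | hq
        · have := hseg_mem hq; omega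
        · have := hsegL_mem hq; omega)
    simpa [zz, mul_add, mul_one] using this

lemma zz_length {w : ℕ} : ∀ {t : ℕ}, (zz w t).length = (2*t+1) * w
  | 0 => by simp [zz, length_hsegL]
  | t+1 => by
    simp [zz, zz_length (t := t), hseg_length, length_hsegL]; ring

/-- Vertical boustrophedon over two rows `r0, r0+1`, columns `0..2t`,
from `(r0,0)` to `(r0+1, 2t)`. -/
def zzv (r0 : ℕ) : ℕ → List (ℕ × ℕ)
  | 0 => [(r0, 0), (r0+1, 0)]
  | t+1 => zzv r0 t ++ [(r0+1, 2*t+1), (r0, 2*t+1), (r0, 2*t+2), (r0+1, 2*t+2)]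

lemma zzv_mem {r0 : ℕ} : ∀ {t : ℕ} {p : ℕ × ℕ}, p ∈ zzv r0 t →
    (p.1 = r0 ∨ p.1 = r0 + 1) ∧ p.2 ≤ 2*t
  | 0, p => by intro h; simp [zzv] at h; rcases h with h | h <;> subst h <;> simp
  | t+1, p => by
    intro h
    rcases List.mem_append.mp h with h | h
    · have := zzv_mem h; omega
    · simp at h
      rcases h with h | h | h | h <;> subst h <;> simp <;> omega

lemma zzv_piece {r0 : ℕ} : ∀ {t : ℕ}, Piece (r0, 0) (r0+1, 2*t) (zzv r0 t)
  | 0 => ⟨by simp [zzv, adjN], by simp [zzv], rfl, rfl⟩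
  | t+1 => by
    have p1 : Piece (r0, 0) (r0+1, 2*t) (zzv r0 t) := zzv_piece
    have p2 : Piece (r0+1, 2*t+1) (r0+1, 2*t+2) [((r0:ℕ)+1, 2*t+1), (r0, 2*t+1), (r0, 2*t+2), (r0+1, 2*t+2)] := by
      refine ⟨?_, ?_, rfl, rfl⟩
      · refine List.isChain_cons_cons.mpr ⟨?_, List.isChain_cons_cons.mpr ⟨?_, List.isChain_pair.mpr ?_⟩⟩ <;>
          unfold adjN <;> simp <;> omega
      · simp <;> omega
    have := p1.glue p2 (by rw [adjN_mk]; omega)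
      (fun p hp hq => by
        have h2 := zzv_mem hp
        simp at hq
        rcases hq with h | h | h | h <;> subst h <;> simp at h2 <;> omega)
    simpa [zzv, mul_add, mul_one] using this

lemma zzv_length {r0 : ℕ} : ∀ {t : ℕ}, (zzv r0 t).length = 2*(2*t+1)
  | 0 => rfl
  | t+1 => by simp [zzv, zzv_length (t := t)]; ring

/-! ### Composite thick-L segments -/

def segRow (k : ℕ) : List (ℕ × ℕ) :=
  hsegL (k+1) 0 k ++ (hseg (k+2) 0 (k+3) ++ (vsegU (k+2) 0 (k+2) ++
    (vsegD (k+1) 0 (k+2) ++ [(k+1, k)])))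

lemma segRow_mem {k : ℕ} {p : ℕ × ℕ} (h : p ∈ segRow k) :
    p.1 < k+3 ∧ p.2 < k+3 ∧ (k+1 ≤ p.1 ∨ k+1 ≤ p.2) := by
  simp only [segRow, List.mem_append, List.mem_singleton] at h
  rcases h with h | h | h | h | h
  · have := hsegL_mem h; omega
  · have := hseg_mem h; omega
  · have := vsegU_mem h; omega
  · have := vsegD_mem h; omega
  · subst h; simp

lemma segRow_piece {k : ℕ} (hk : 1 ≤ k) : Piece (k+1, k-1) (k+1, k) (segRow k) := by
  have p1 := hsegL_piece (r := k+1) (a := 0) hk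
  have p2 := hseg_piece (r := k+2) (a := 0) (len := k+3) (by omega)
  have p3 := vsegU_piece (c := k+2) (a := 0) (len := k+2) (by omega)
  have p4 := vsegD_piece (c := k+1) (a := 0) (len := k+2) (by omega)
  have p5 := piece_single (k+1, k)
  have q4 := p4.glue p5 (by rw [adjN_mk]; omega)
    (fun p hp hq => by have := vsegD_mem hp; simp at hq; subst hq; simp at this <;> omega)
  have q3 := p3.glue q4 (by rw [adjN_mk]; omega)
    (fun p hp hq => by
      have h1 := vsegU_mem hp
      rcases List.mem_append.mp hq with h | h
      · have := vsegD_mem h; omega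
      · simp at h; subst h; simp at h1 <;> omega)
  have q2 := p2.glue q3 (by rw [adjN_mk]; omega)
    (fun p hp hq => by
      have h1 := hseg_mem hp
      rcases List.mem_append.mp hq with h | hq
      · have := vsegU_mem h; omega
      rcases List.mem_append.mp hq with h | h
      · have := vsegD_mem h; omega
      · simp at h; subst h; simp at h1 <;> omega)
  have q1 := p1.glue q2 (by rw [adjN_mk]; omega)
    (fun p hp hq => by
      have h1 := hsegL_mem hp
      rcases List.mem_append.mp hq with h | hq
      · have := hseg_mem h; omega
      rcases List.mem_append.mp hq with h | hq
      · have := vsegU_mem h; omega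
      rcases List.mem_append.mp hq with h | h
      · have := vsegD_mem h; omega
      · simp at h; subst h; simp at h1 <;> omega)
  simpa [segRow, show 0 + k - 1 = k-1 by omega, show 0 + (k+3) - 1 = k+2 by omega,
    show 0 + (k+2) - 1 = k+1 by omega] using q1

lemma segRow_length {k : ℕ} : (segRow k).length = 4*k + 8 := by
  simp [segRow, length_hsegL, hseg_length, length_vsegU, length_vsegD]; ring

def segCol (k : ℕ) : List (ℕ × ℕ) := (segRow k).map Prod.swap

lemma segCol_mem {k : ℕ} {p : ℕ × ℕ} (h : p ∈ segCol k) :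
    p.1 < k+3 ∧ p.2 < k+3 ∧ (k+1 ≤ p.1 ∨ k+1 ≤ p.2) := by
  rcases List.mem_map.mp h with ⟨q, hq, rfl⟩
  have := segRow_mem hq
  simp [Prod.swap] at *
  omega

lemma segCol_piece {k : ℕ} (hk : 1 ≤ k) : Piece (k-1, k+1) (k, k+1) (segCol k) :=
  (segRow_piece hk).swap

lemma segCol_length {k : ℕ} : (segCol k).length = 4*k + 8 := by
  simp [segCol, segRow_length]

def endSeg1 (k : ℕ) : List (ℕ × ℕ) :=
  hsegL (k+1) 0 (k+1) ++ (hseg (k+2) 0 (k+3) ++ (vsegU (k+2) 0 (k+2) ++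
    (vsegD (k+1) 0 (k+1) ++ [(k+1, k+1)])))

lemma endSeg1_mem {k : ℕ} {p : ℕ × ℕ} (h : p ∈ endSeg1 k) :
    p.1 < k+3 ∧ p.2 < k+3 ∧ (k+1 ≤ p.1 ∨ k+1 ≤ p.2) := by
  simp only [endSeg1, List.mem_append, List.mem_singleton] at h
  rcases h with h | h | h | h | h
  · have := hsegL_mem h; omega
  · have := hseg_mem h; omega
  · have := vsegU_mem h; omega
  · have := vsegD_mem h; omega
  · subst h; simp

lemma endSeg1_piece {k : ℕ} : Piece (k+1, k) (k+1, k+1) (endSeg1 k) := by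
  have p1 := hsegL_piece (r := k+1) (a := 0) (len := k+1) (by omega)
  have p2 := hseg_piece (r := k+2) (a := 0) (len := k+3) (by omega)
  have p3 := vsegU_piece (c := k+2) (a := 0) (len := k+2) (by omega)
  have p4 := vsegD_piece (c := k+1) (a := 0) (len := k+1) (by omega)
  have p5 := piece_single (k+1, k+1)
  have q4 := p4.glue p5 (by rw [adjN_mk]; omega)
    (fun p hp hq => by have := vsegD_mem hp; simp at hq; subst hq; simp at this <;> omega)
  have q3 := p3.glue q4 (by rw [adjN_mk]; omega)
    (fun p hp hq => by
      have h1 := vsegU_mem hp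
      rcases List.mem_append.mp hq with h | h
      · have := vsegD_mem h; omega
      · simp at h; subst h; simp at h1 <;> omega)
  have q2 := p2.glue q3 (by rw [adjN_mk]; omega)
    (fun p hp hq => by
      have h1 := hseg_mem hp
      rcases List.mem_append.mp hq with h | hq
      · have := vsegU_mem h; omega
      rcases List.mem_append.mp hq with h | h
      · have := vsegD_mem h; omega
      · simp at h; subst h; simp at h1 <;> omega)
  have q1 := p1.glue q2 (by rw [adjN_mk]; omega)
    (fun p hp hq => by
      have h1 := hsegL_mem hp
      rcases List.mem_append.mp hq with h | hq
      · have := hseg_mem h; omega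
      rcases List.mem_append.mp hq with h | hq
      · have := vsegU_mem h; omega
      rcases List.mem_append.mp hq with h | h
      · have := vsegD_mem h; omega
      · simp at h; subst h; simp at h1 <;> omega)
  simpa [endSeg1, show 0 + (k+1) - 1 = k by omega, show 0 + (k+3) - 1 = k+2 by omega,
    show 0 + (k+2) - 1 = k+1 by omega] using q1

lemma endSeg1_length {k : ℕ} : (endSeg1 k).length = 4*k + 8 := by
  simp [endSeg1, length_hsegL, hseg_length, length_vsegU, length_vsegD]; ring

def endSeg2 (k : ℕ) : List (ℕ × ℕ) :=
  hsegL (k+1) 0 (k+1) ++ (hseg (k+2) 0 (k+2) ++ ([(k+1, k+1)] ++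
    (vsegU (k+1) 0 (k+1) ++ (vsegD (k+2) 0 (k+2) ++ [(k+2, k+2)]))))

lemma endSeg2_mem {k : ℕ} {p : ℕ × ℕ} (h : p ∈ endSeg2 k) :
    p.1 < k+3 ∧ p.2 < k+3 ∧ (k+1 ≤ p.1 ∨ k+1 ≤ p.2) := by
  simp only [endSeg2, List.mem_append, List.mem_singleton] at h
  rcases h with h | h | h | h | h | h
  · have := hsegL_mem h; omega
  · have := hseg_mem h; omega
  · subst h; simp
  · have := vsegU_mem h; omega
  · have := vsegD_mem h; omega
  · subst h; simp

lemma endSeg2_piece {k : ℕ} : Piece (k+1, k) (k+2, k+2) (endSeg2 k) := by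
  have p1 := hsegL_piece (r := k+1) (a := 0) (len := k+1) (by omega)
  have p2 := hseg_piece (r := k+2) (a := 0) (len := k+2) (by omega)
  have p3 := piece_single (k+1, k+1)
  have p4 := vsegU_piece (c := k+1) (a := 0) (len := k+1) (by omega)
  have p5 := vsegD_piece (c := k+2) (a := 0) (len := k+2) (by omega)
  have p6 := piece_single (k+2, k+2)
  have q5 := p5.glue p6 (by rw [adjN_mk]; omega)
    (fun p hp hq => by have := vsegD_mem hp; simp at hq; subst hq; simp at this <;> omega)
  have q4 := p4.glue q5 (by rw [adjN_mk]; omega)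
    (fun p hp hq => by
      have h1 := vsegU_mem hp
      rcases List.mem_append.mp hq with h | h
      · have := vsegD_mem h; omega
      · simp at h; subst h; simp at h1 <;> omega)
  have q3 := p3.glue q4 (by rw [adjN_mk]; omega)
    (fun p hp hq => by
      simp at hp; subst hp
      rcases List.mem_append.mp hq with h | hq
      · have := vsegU_mem h; simp at this <;> omega
      rcases List.mem_append.mp hq with h | h
      · have := vsegD_mem h; simp at this <;> omega
      · simp at h)
  have q2 := p2.glue q3 (by rw [adjN_mk]; omega)
    (fun p hp hq => by
      have h1 := hseg_mem hp
      rcases List.mem_append.mp hq with h | hq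
      · simp at h; subst h; simp at h1 <;> omega
      rcases List.mem_append.mp hq with h | hq
      · have := vsegU_mem h; omega
      rcases List.mem_append.mp hq with h | h
      · have := vsegD_mem h; omega
      · simp at h; subst h; simp at h1 <;> omega)
  have q1 := p1.glue q2 (by rw [adjN_mk]; omega)
    (fun p hp hq => by
      have h1 := hsegL_mem hp
      rcases List.mem_append.mp hq with h | hq
      · have := hseg_mem h; omega
      rcases List.mem_append.mp hq with h | hq
      · simp at h; subst h; simp at h1 <;> omega
      rcases List.mem_append.mp hq with h | hq
      · have := vsegU_mem h; omega
      rcases List.mem_append.mp hq with h | h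
      · have := vsegD_mem h; omega
      · simp at h; subst h; simp at h1 <;> omega)
  simpa [endSeg2, show 0 + (k+1) - 1 = k by omega, show 0 + (k+2) - 1 = k+1 by omega] using q1

lemma endSeg2_length {k : ℕ} : (endSeg2 k).length = 4*k + 8 := by
  simp [endSeg2, length_hsegL, hseg_length, length_vsegU, length_vsegD]; ring

/-! ### Square path and bottom strips -/

def squarePath (t : ℕ) : List (ℕ × ℕ) := vsegU (2*t) 0 (2*t+1) ++ zz (2*t) t

lemma squarePath_mem {t : ℕ} {p : ℕ × ℕ} (h : p ∈ squarePath t) :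
    p.1 ≤ 2*t ∧ p.2 ≤ 2*t := by
  rcases List.mem_append.mp h with h | h
  · have := vsegU_mem h; omega
  · have := zz_mem h; omega

lemma squarePath_piece {t : ℕ} (ht : 1 ≤ t) : Piece (2*t, 2*t) (2*t, 0) (squarePath t) := by
  have p1 := vsegU_piece (c := 2*t) (a := 0) (len := 2*t+1) (by omega)
  have p2 := zz_piece (w := 2*t) (by omega) (t := t)
  have q := p1.glue p2 (by rw [adjN_mk]; omega)
    (fun p hp hq => by
      have h1 := vsegU_mem hp
      have h2 := zz_mem hq
      omega)
  simpa [squarePath, show 0 + (2*t+1) - 1 = 2*t by omega] using q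

lemma squarePath_length {t : ℕ} : (squarePath t).length = (2*t+1) * (2*t+1) := by
  simp [squarePath, length_vsegU, zz_length]; ring

def strip5 (t : ℕ) : List (ℕ × ℕ) :=
  zzv (2*t+1) t ++ ([(2*t+2, 2*t+1)] ++ (vsegU (2*t+1) 0 (2*t+2) ++
    (vsegD (2*t+2) 0 (2*t+2) ++ [(2*t+2, 2*t+2)])))

lemma strip5_mem {t : ℕ} {p : ℕ × ℕ} (h : p ∈ strip5 t) :
    p.1 < 2*t+3 ∧ p.2 < 2*t+3 ∧ (2*t+1 ≤ p.1 ∨ 2*t+1 ≤ p.2) := by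
  simp only [strip5, List.mem_append, List.mem_singleton] at h
  rcases h with h | h | h | h | h
  · have := zzv_mem h; omega
  · subst h; simp
  · have := vsegU_mem h; omega
  · have := vsegD_mem h; omega
  · subst h; simp

lemma strip5_piece {t : ℕ} : Piece (2*t+1, 0) (2*t+2, 2*t+2) (strip5 t) := by
  have p1 := zzv_piece (r0 := 2*t+1) (t := t)
  have p2 := piece_single (2*t+2, 2*t+1)
  have p3 := vsegU_piece (c := 2*t+1) (a := 0) (len := 2*t+2) (by omega)
  have p4 := vsegD_piece (c := 2*t+2) (a := 0) (len := 2*t+2) (by omega)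
  have p5 := piece_single (2*t+2, 2*t+2)
  have q4 := p4.glue p5 (by rw [adjN_mk]; omega)
    (fun p hp hq => by have := vsegD_mem hp; simp at hq; subst hq; simp at this <;> omega)
  have q3 := p3.glue q4 (by rw [adjN_mk]; omega)
    (fun p hp hq => by
      have h1 := vsegU_mem hp
      rcases List.mem_append.mp hq with h | h
      · have := vsegD_mem h; omega
      · simp at h; subst h; simp at h1 <;> omega)
  have q2 := p2.glue q3 (by rw [adjN_mk]; omega)
    (fun p hp hq => by
      simp at hp; subst hp
      rcases List.mem_append.mp hq with h | hq
      · have := vsegU_mem h; simp at this <;> omega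
      rcases List.mem_append.mp hq with h | h
      · have := vsegD_mem h; simp at this <;> omega
      · simp at h)
  have q1 := p1.glue q2 (by rw [adjN_mk]; omega)
    (fun p hp hq => by
      have h1 := zzv_mem hp
      rcases List.mem_append.mp hq with h | hq
      · simp at h; subst h; simp at h1 <;> omega
      rcases List.mem_append.mp hq with h | hq
      · have := vsegU_mem h; omega
      rcases List.mem_append.mp hq with h | h
      · have := vsegD_mem h; omega
      · simp at h; subst h; simp at h1 <;> omega)
  simpa [strip5, show 0 + (2*t+2) - 1 = 2*t+1 by omega] using q1

lemma strip5_length {t : ℕ} : (strip5 t).length = 8*t + 8 := by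
  simp [strip5, zzv_length, length_vsegU, length_vsegD]; ring

def strip6 (t : ℕ) : List (ℕ × ℕ) :=
  zzv (2*t+1) t ++ ([(2*t+2, 2*t+1), (2*t+2, 2*t+2), (2*t+1, 2*t+2)] ++
    (vsegU (2*t+2) 0 (2*t+1) ++ (vsegD (2*t+1) 0 (2*t+1) ++ [(2*t+1, 2*t+1)])))

lemma strip6_mem {t : ℕ} {p : ℕ × ℕ} (h : p ∈ strip6 t) :
    p.1 < 2*t+3 ∧ p.2 < 2*t+3 ∧ (2*t+1 ≤ p.1 ∨ 2*t+1 ≤ p.2) := by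
  simp only [strip6, List.mem_append, List.mem_singleton, List.mem_cons,
    List.not_mem_nil, or_false] at h
  rcases h with h | (h | h | h) | h | h | h
  · have := zzv_mem h; omega
  · subst h; simp
  · subst h; simp
  · subst h; simp
  · have := vsegU_mem h; omega
  · have := vsegD_mem h; omega
  · subst h; simp

lemma strip6_piece {t : ℕ} : Piece (2*t+1, 0) (2*t+1, 2*t+1) (strip6 t) := by
  have p1 := zzv_piece (r0 := 2*t+1) (t := t)
  have p2 : Piece (2*t+2, 2*t+1) (2*t+1, 2*t+2)
      [((2:ℕ)*t+2, 2*t+1), (2*t+2, 2*t+2), (2*t+1, 2*t+2)] := by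
    refine ⟨?_, ?_, rfl, rfl⟩
    · refine List.isChain_cons_cons.mpr ⟨?_, List.isChain_pair.mpr ?_⟩ <;> (rw [adjN_mk]; omega)
    · simp <;> omega
  have p3 := vsegU_piece (c := 2*t+2) (a := 0) (len := 2*t+1) (by omega)
  have p4 := vsegD_piece (c := 2*t+1) (a := 0) (len := 2*t+1) (by omega)
  have p5 := piece_single (2*t+1, 2*t+1)
  have q4 := p4.glue p5 (by rw [adjN_mk]; omega)
    (fun p hp hq => by have := vsegD_mem hp; simp at hq; subst hq; simp at this <;> omega)
  have q3 := p3.glue q4 (by rw [adjN_mk]; omega)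
    (fun p hp hq => by
      have h1 := vsegU_mem hp
      rcases List.mem_append.mp hq with h | h
      · have := vsegD_mem h; omega
      · simp at h; subst h; simp at h1 <;> omega)
  have q2 := p2.glue q3 (by rw [adjN_mk]; omega)
    (fun p hp hq => by
      simp at hp
      rcases List.mem_append.mp hq with h | hq
      · have h1 := vsegU_mem h
        rcases hp with h2 | h2 | h2 <;> subst h2 <;> simp at h1 <;> omega
      rcases List.mem_append.mp hq with h | h
      · have h1 := vsegD_mem h
        rcases hp with h2 | h2 | h2 <;> subst h2 <;> simp at h1 <;> omega
      · simp at h; subst h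
        rcases hp with h2 | h2 | h2 <;> simp at h2 <;> omega)
  have q1 := p1.glue q2 (by rw [adjN_mk]; omega)
    (fun p hp hq => by
      have h1 := zzv_mem hp
      rcases List.mem_append.mp hq with h | hq
      · simp at h
        rcases h with h | h | h <;> subst h <;> simp at h1 <;> omega
      rcases List.mem_append.mp hq with h | hq
      · have := vsegU_mem h; omega
      rcases List.mem_append.mp hq with h | h
      · have := vsegD_mem h; omega
      · simp at h; subst h; simp at h1 <;> omega)
  simpa [strip6, show 0 + (2*t+1) - 1 = 2*t by omega] using q1

lemma strip6_length {t : ℕ} : (strip6 t).length = 8*t + 8 := by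
  simp [strip6, zzv_length, length_vsegU, length_vsegD]; ring

/-! ### Whole-grid special cases -/

def case5 (t : ℕ) : List (ℕ × ℕ) := squarePath t ++ strip5 t

lemma case5_piece {t : ℕ} (ht : 1 ≤ t) : Piece (2*t, 2*t) (2*t+2, 2*t+2) (case5 t) :=
  (squarePath_piece ht).glue strip5_piece (by rw [adjN_mk]; omega)
    (fun p hp hq => by have := squarePath_mem hp; have := strip5_mem hq; omega)

lemma case5_mem {t : ℕ} {p : ℕ × ℕ} (h : p ∈ case5 t) : p.1 < 2*t+3 ∧ p.2 < 2*t+3 := by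
  rcases List.mem_append.mp h with h | h
  · have := squarePath_mem h; omega
  · have := strip5_mem h; omega

lemma case5_length {t : ℕ} : (case5 t).length = (2*t+3) * (2*t+3) := by
  simp [case5, squarePath_length, strip5_length]; ring

def case6 (t : ℕ) : List (ℕ × ℕ) := squarePath t ++ strip6 t

lemma case6_piece {t : ℕ} (ht : 1 ≤ t) : Piece (2*t, 2*t) (2*t+1, 2*t+1) (case6 t) :=
  (squarePath_piece ht).glue strip6_piece (by rw [adjN_mk]; omega)
    (fun p hp hq => by have := squarePath_mem hp; have := strip6_mem hq; omega)

lemma case6_mem {t : ℕ} {p : ℕ × ℕ} (h : p ∈ case6 t) : p.1 < 2*t+3 ∧ p.2 < 2*t+3 := by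
  rcases List.mem_append.mp h with h | h
  · have := squarePath_mem h; omega
  · have := strip6_mem h; omega

lemma case6_length {t : ℕ} : (case6 t).length = (2*t+3) * (2*t+3) := by
  simp [case6, squarePath_length, strip6_length]; ring

def case7 (t : ℕ) : List (ℕ × ℕ) :=
  [(2*t+1, 2*t+1), (2*t+1, 2*t+2)] ++ (vsegU (2*t+2) 0 (2*t+1) ++
    (vsegD (2*t+1) 0 (2*t+1) ++ (squarePath t ++ (zzv (2*t+1) t ++
      [(2*t+2, 2*t+1), (2*t+2, 2*t+2)]))))

lemma case7_mem {t : ℕ} {p : ℕ × ℕ} (h : p ∈ case7 t) : p.1 < 2*t+3 ∧ p.2 < 2*t+3 := by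
  simp only [case7, List.mem_append, List.mem_singleton, List.mem_cons,
    List.not_mem_nil, or_false] at h
  rcases h with (h | h) | h | h | h | h | (h | h)
  · subst h; simp
  · subst h; simp
  · have := vsegU_mem h; omega
  · have := vsegD_mem h; omega
  · have := squarePath_mem h; omega
  · have := zzv_mem h; omega
  · subst h; simp
  · subst h; simp

lemma case7_piece {t : ℕ} (ht : 1 ≤ t) :
    Piece (2*t+1, 2*t+1) (2*t+2, 2*t+2) (case7 t) := by
  have p1 : Piece (2*t+1, 2*t+1) (2*t+1, 2*t+2) [((2:ℕ)*t+1, 2*t+1), (2*t+1, 2*t+2)] :=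
    ⟨List.isChain_pair.mpr (by rw [adjN_mk]; omega), by simp <;> omega, rfl, rfl⟩
  have p2 := vsegU_piece (c := 2*t+2) (a := 0) (len := 2*t+1) (by omega)
  have p3 := vsegD_piece (c := 2*t+1) (a := 0) (len := 2*t+1) (by omega)
  have p4 := squarePath_piece ht
  have p5 := zzv_piece (r0 := 2*t+1) (t := t)
  have p6 : Piece (2*t+2, 2*t+1) (2*t+2, 2*t+2) [((2:ℕ)*t+2, 2*t+1), (2*t+2, 2*t+2)] :=
    ⟨List.isChain_pair.mpr (by rw [adjN_mk]; omega), by simp <;> omega, rfl, rfl⟩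
  have q5 := p5.glue p6 (by rw [adjN_mk]; omega)
    (fun p hp hq => by
      have h1 := zzv_mem hp
      simp at hq
      rcases hq with h | h <;> subst h <;> simp at h1 <;> omega)
  have q4 := p4.glue q5 (by rw [adjN_mk]; omega)
    (fun p hp hq => by
      have h1 := squarePath_mem hp
      rcases List.mem_append.mp hq with h | h
      · have := zzv_mem h; omega
      · simp at h; rcases h with h | h <;> subst h <;> simp at h1 <;> omega)
  have q3 := p3.glue q4 (by rw [adjN_mk]; omega)
    (fun p hp hq => by
      have h1 := vsegD_mem hp
      rcases List.mem_append.mp hq with h | hq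
      · have := squarePath_mem h; omega
      rcases List.mem_append.mp hq with h | h
      · have := zzv_mem h; omega
      · simp at h; rcases h with h | h <;> subst h <;> simp at h1 <;> omega)
  have q2 := p2.glue q3 (by rw [adjN_mk]; omega)
    (fun p hp hq => by
      have h1 := vsegU_mem hp
      rcases List.mem_append.mp hq with h | hq
      · have := vsegD_mem h; omega
      rcases List.mem_append.mp hq with h | hq
      · have := squarePath_mem h; omega
      rcases List.mem_append.mp hq with h | h
      · have := zzv_mem h; omega
      · simp at h; rcases h with h | h <;> subst h <;> simp at h1 <;> omega)
  have q1 := p1.glue q2 (by rw [adjN_mk]; omega)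
    (fun p hp hq => by
      simp at hp
      have hbase : p.1 = 2*t+1 ∧ (p.2 = 2*t+1 ∨ p.2 = 2*t+2) := by
        rcases hp with h | h <;> subst h <;> simp
      rcases List.mem_append.mp hq with h | hq
      · have := vsegU_mem h; omega
      rcases List.mem_append.mp hq with h | hq
      · have := vsegD_mem h; omega
      rcases List.mem_append.mp hq with h | hq
      · have := squarePath_mem h; omega
      rcases List.mem_append.mp hq with h | h
      · have := zzv_mem h; omega
      · simp at h; rcases h with h | h <;> subst h <;> simp at hbase <;> omega)
  simpa [case7, show 0 + (2*t+1) - 1 = 2*t by omega] using q1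

lemma case7_length {t : ℕ} : (case7 t).length = (2*t+3) * (2*t+3) := by
  simp [case7, length_vsegU, length_vsegD, squarePath_length, zzv_length]; ring

/-! ### Hamiltonian lists -/

structure HamL (m : ℕ) (a b : ℕ × ℕ) (l : List (ℕ × ℕ)) : Prop where
  piece : Piece a b l
  bound : ∀ p ∈ l, p.1 < m ∧ p.2 < m
  len : l.length = m * m

lemma HamL.mem_of {m : ℕ} {a b : ℕ × ℕ} {l : List (ℕ × ℕ)} (h : HamL m a b l)
    {p : ℕ × ℕ} (h1 : p.1 < m) (h2 : p.2 < m) : p ∈ l := by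
  classical
  have hsub : l.toFinset ⊆ Finset.range m ×ˢ Finset.range m := by
    intro q hq
    rw [List.mem_toFinset] at hq
    have := h.bound q hq
    simp [Finset.mem_product]; omega
  have hcard : (Finset.range m ×ˢ Finset.range m).card ≤ l.toFinset.card := by
    rw [List.toFinset_card_of_nodup h.piece.nodup, h.len]
    simp
  have heq := Finset.eq_of_subset_of_card_le hsub hcard
  have : p ∈ l.toFinset := by
    rw [heq]; simp [Finset.mem_product]; omega
  simpa [List.mem_toFinset] using this

lemma HamL.rev {m : ℕ} {a b : ℕ × ℕ} {l : List (ℕ × ℕ)} (h : HamL m a b l) :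
    HamL m b a l.reverse :=
  ⟨h.piece.reverse, fun p hp => h.bound p (List.mem_reverse.mp hp), by simp [h.len]⟩

lemma splice_ham {k : ℕ} {a b x sh sl : ℕ × ℕ} {X Y seg : List (ℕ × ℕ)}
    (hham : HamL (k+1) a b (X ++ (k, k) :: Y))
    (hX : X ≠ [])
    (hxl : X.getLast? = some x)
    (hseg : Piece sh sl seg)
    (hsegmem : ∀ p ∈ seg, p.1 < k+3 ∧ p.2 < k+3 ∧ (k+1 ≤ p.1 ∨ k+1 ≤ p.2))
    (hseglen : seg.length = 4*k+8)
    (hadj1 : adjN x sh) (hadj2 : adjN sl (k, k)) :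
    HamL (k+3) a b (X ++ (seg ++ ((k, k) :: Y))) := by
  have hchain := hham.piece.chain
  rw [List.isChain_append] at hchain
  obtain ⟨hcX, hcCY, hjun⟩ := hchain
  have hnodup := hham.piece.nodup
  rw [List.nodup_append] at hnodup
  obtain ⟨hnX, hnCY, hdisXCY⟩ := hnodup
  have hheadX : X.head? = some a := by
    have := hham.piece.head
    rwa [List.head?_append_of_ne_nil _ hX] at this
  have hlastCY : ((k, k) :: Y).getLast? = some b := by
    have := hham.piece.last
    rwa [List.getLast?_append_cons] at this
  have PX : Piece a x X := ⟨hcX, hnX, hheadX, hxl⟩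
  have PCY : Piece (k, k) b ((k, k) :: Y) := ⟨hcCY, hnCY, rfl, hlastCY⟩
  have hboundl := hham.bound
  have PsegCY := hseg.glue PCY hadj2
    (fun p hp hq => by
      have h1 := hsegmem p hp
      have h2 := hboundl p (List.mem_append.mpr (Or.inr hq))
      omega)
  have Pall := PX.glue PsegCY hadj1
    (fun p hp hq => by
      rcases List.mem_append.mp hq with hq | hq
      · have h1 := hsegmem p hq
        have h2 := hboundl p (List.mem_append.mpr (Or.inl hp))
        omega
      · exact hdisXCY p hp p hq rfl)
  refine ⟨Pall, ?_, ?_⟩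
  · intro p hp
    rcases List.mem_append.mp hp with hp | hp
    · have := hboundl p (List.mem_append.mpr (Or.inl hp)); omega
    rcases List.mem_append.mp hp with hp | hp
    · have := hsegmem p hp; omega
    · have := hboundl p (List.mem_append.mpr (Or.inr hp)); omega
  · have h1 := hham.len
    have e1 : (k+1)*(k+1) + (4*k+8) = (k+3)*(k+3) := by ring
    simp only [List.length_append, List.length_cons] at h1 ⊢
    omega

lemma extend_ham {k : ℕ} {a e : ℕ × ℕ} {l seg : List (ℕ × ℕ)}
    (hham : HamL (k+1) a (k, k) l)
    (hseg : Piece (k+1, k) e seg)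
    (hsegmem : ∀ p ∈ seg, p.1 < k+3 ∧ p.2 < k+3 ∧ (k+1 ≤ p.1 ∨ k+1 ≤ p.2))
    (hseglen : seg.length = 4*k+8) :
    HamL (k+3) a e (l ++ seg) := by
  have P := hham.piece.glue hseg (by rw [adjN_mk]; omega)
    (fun p hp hq => by
      have h1 := hham.bound p hp
      have h2 := hsegmem p hq
      omega)
  refine ⟨P, ?_, ?_⟩
  · intro p hp
    rcases List.mem_append.mp hp with hp | hp
    · have := hham.bound p hp; omega
    · have := hsegmem p hp; omega
  · have h1 := hham.len
    have e1 : (k+1)*(k+1) + (4*k+8) = (k+3)*(k+3) := by ring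
    simp only [List.length_append] at h1 ⊢
    omega

/-! ### Main induction -/

theorem mainN : ∀ n : ℕ, 1 ≤ n → ∀ i i' : ℕ, i < i' → i' ≤ 2*n →
    ∃ l, HamL (2*n+1) (i, i) (i', i') l := by
  intro n hn
  induction n, hn using Nat.le_induction with
  | base =>
    intro i i' h1 h2
    interval_cases i' <;> interval_cases i
    · exact ⟨[(0,0),(1,0),(2,0),(2,1),(2,2),(1,2),(0,2),(0,1),(1,1)],
        ⟨by simp [List.isChain_cons_cons, List.isChain_singleton, adjN, Prod.ext_iff],
         by decide, by decide, by decide⟩, by decide, by decide⟩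
    · exact ⟨[(0,0),(0,1),(0,2),(1,2),(1,1),(1,0),(2,0),(2,1),(2,2)],
        ⟨by simp [List.isChain_cons_cons, List.isChain_singleton, adjN, Prod.ext_iff],
         by decide, by decide, by decide⟩, by decide, by decide⟩
    · exact ⟨[(1,1),(1,2),(0,2),(0,1),(0,0),(1,0),(2,0),(2,1),(2,2)],
        ⟨by simp [List.isChain_cons_cons, List.isChain_singleton, adjN, Prod.ext_iff],
         by decide, by decide, by decide⟩, by decide, by decide⟩
  | succ n hn ih =>
    intro i i' h1 h2
    have hgrid : 2*(n+1)+1 = (2*n)+3 := by ring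
    rw [hgrid]
    by_cases hA : i' ≤ 2*n
    · -- both endpoints in the inner grid : splice the thick L at the corner
      obtain ⟨l, hl⟩ := ih i i' h1 hA
      have hc : ((2*n, 2*n) : ℕ × ℕ) ∈ l := hl.mem_of (by simp) (by simp)
      obtain ⟨X, Y, rfl⟩ := List.append_of_mem hc
      have hX : X ≠ [] := by
        intro he
        have := hl.piece.head
        rw [he, List.nil_append, List.head?_cons, Option.some_inj] at this
        have := congrArg Prod.fst this
        simp at this
        omega
      obtain ⟨x, hxl⟩ : ∃ x, X.getLast? = some x := by
        cases hX' : X.getLast? with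
        | none => exact absurd (List.getLast?_eq_none_iff.mp hX') hX
        | some x => exact ⟨x, rfl⟩
      have hxmem : x ∈ X := List.mem_of_getLast? hxl
      have hxbound := hl.bound x (List.mem_append.mpr (Or.inl hxmem))
      have hadjx : adjN x (2*n, 2*n) := by
        have hchain := hl.piece.chain
        rw [List.isChain_append] at hchain
        exact hchain.2.2 x (by rw [hxl]; rfl) (2*n, 2*n) rfl
      obtain ⟨x1, x2⟩ := x
      rw [adjN_mk] at hadjx
      simp only at hxbound
      have hx12 : (x1 = 2*n ∧ x2 = 2*n - 1) ∨ (x1 = 2*n - 1 ∧ x2 = 2*n) := by omega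
      rcases hx12 with ⟨hx1, hx2⟩ | ⟨hx1, hx2⟩ <;> subst hx1 <;> subst hx2
      · exact ⟨_, splice_ham (k := 2*n) hl hX hxl (segRow_piece (k := 2*n) (by omega))
          (fun p hp => segRow_mem hp) segRow_length
          (by rw [adjN_mk]; omega) (by rw [adjN_mk]; omega)⟩
      · exact ⟨_, splice_ham (k := 2*n) hl hX hxl (segCol_piece (k := 2*n) (by omega))
          (fun p hp => segCol_mem hp) segCol_length
          (by rw [adjN_mk]; omega) (by rw [adjN_mk]; omega)⟩
    · -- i' = 2n+1 or 2n+2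
      have hi' : i' = 2*n+1 ∨ i' = 2*n+2 := by omega
      by_cases hik : i < 2*n
      · obtain ⟨l, hl⟩ := ih i (2*n) hik (le_refl _)
        rcases hi' with rfl | rfl
        · exact ⟨_, extend_ham (k := 2*n) hl endSeg1_piece
            (fun p hp => endSeg1_mem hp) endSeg1_length⟩
        · exact ⟨_, extend_ham (k := 2*n) hl endSeg2_piece
            (fun p hp => endSeg2_mem hp) endSeg2_length⟩
      · have hik' : i = 2*n ∨ i = 2*n+1 := by omega
        rcases hik' with rfl | rfl
        · rcases hi' with rfl | rfl
          · exact ⟨case6 n, case6_piece hn, fun p hp => by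
              have := case6_mem hp; omega, case6_length⟩
          · exact ⟨case5 n, case5_piece hn, fun p hp => by
              have := case5_mem hp; omega, case5_length⟩
        · rcases hi' with rfl | rfl
          · omega
          · exact ⟨case7 n, case7_piece hn, fun p hp => by
              have := case7_mem hp; omega, case7_length⟩

/-! ### From lists to walks -/

def walkOfChain {V : Type*} {G : SimpleGraph V} :
    (l : List V) → l.IsChain G.Adj → (hne : l ≠ []) → G.Walk (l.head hne) (l.getLast hne)
  | [_], _, _ => SimpleGraph.Walk.nil
  | _ :: b :: t, hc, _ =>
    (SimpleGraph.Walk.cons (List.isChain_cons_cons.mp hc).1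
      (walkOfChain (b :: t) (List.isChain_cons_cons.mp hc).2 (List.cons_ne_nil b t))).copy
      rfl (List.getLast_cons (List.cons_ne_nil b t)).symm

theorem support_walkOfChain {V : Type*} {G : SimpleGraph V} :
    ∀ (l : List V) (hc : l.IsChain G.Adj) (hne : l ≠ []),
      (walkOfChain l hc hne).support = l
  | [_], _, _ => rfl
  | _ :: b :: t, hc, _ => by
    rw [walkOfChain]
    refine (SimpleGraph.Walk.support_copy _ _ _).trans ?_
    exact congrArg (List.cons _) (support_walkOfChain (b :: t) _ _)

lemma grid_adj_iff {m : ℕ} {c c' : Fin m × Fin m} :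
    (gridGraph m).Adj c c' ↔ adjN (c.1.1, c.2.1) (c'.1.1, c'.2.1) := by
  show (((c.1 : ℤ) - (c'.1 : ℤ)).natAbs + ((c.2 : ℤ) - (c'.2 : ℤ)).natAbs = 1) ↔ _
  rw [adjN_mk]
  omega

/-- in the `(2n+1) × (2n+1)` grid graph (`n ≥ 1`), any two distinct cells
on the main diagonal are joined by a Hamiltonian path. -/
theorem exists_hamiltonian_path_main_diagonal (n : ℕ) (hn : 1 ≤ n)
    (i i' : Fin (2 * n + 1)) (hne : i ≠ i') :
    ∃ p : (gridGraph (2 * n + 1)).Walk (i, i) (i', i'), p.IsHamiltonian := by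
  have hm : 0 < 2 * n + 1 := by omega
  have hvne : i.1 ≠ i'.1 := fun h => hne (Fin.ext h)
  have key : ∃ l, HamL (2*n+1) (i.1, i.1) (i'.1, i'.1) l := by
    rcases lt_or_gt_of_ne hvne with h | h
    · exact mainN n hn i.1 i'.1 h (by omega)
    · obtain ⟨l, hl⟩ := mainN n hn i'.1 i.1 h (by omega)
      exact ⟨l.reverse, hl.rev⟩
  obtain ⟨l, hl⟩ := key
  let f : ℕ × ℕ → Fin (2*n+1) × Fin (2*n+1) :=
    fun p => (⟨p.1 % (2*n+1), Nat.mod_lt _ hm⟩, ⟨p.2 % (2*n+1), Nat.mod_lt _ hm⟩)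
  let g : Fin (2*n+1) × Fin (2*n+1) → ℕ × ℕ := fun c => (c.1.1, c.2.1)
  have hginj : Function.Injective g := by
    intro a b hab
    obtain ⟨h1, h2⟩ := Prod.mk.injEq .. ▸ hab
    exact Prod.ext (Fin.ext (by simpa using congrArg Prod.fst hab))
      (Fin.ext (by simpa using congrArg Prod.snd hab))
  set l' : List (Fin (2*n+1) × Fin (2*n+1)) := l.map f with hl'def
  have hmap : l'.map g = l := by
    rw [hl'def, List.map_map]
    have : ∀ p ∈ l, (g ∘ f) p = id p := by
      intro p hp
      have := hl.bound p hp
      simp only [g, f, Function.comp, id]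
      rw [Nat.mod_eq_of_lt (by omega), Nat.mod_eq_of_lt (by omega)]
    rw [List.map_congr_left this, List.map_id]
  have hchain : l'.IsChain (gridGraph (2*n+1)).Adj := by
    have h0 : (l'.map g).IsChain adjN := by rw [hmap]; exact hl.piece.chain
    rw [List.isChain_map] at h0
    exact h0.imp (fun a b hab => grid_adj_iff.mpr hab)
  have hnodup : l'.Nodup := List.Nodup.of_map g (by rw [hmap]; exact hl.piece.nodup)
  have hne' : l' ≠ [] := by
    intro he
    have := hl.piece.head
    rw [← hmap, he] at this
    simp at this
  have hhead : l'.head hne' = (i, i) := by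
    have h1 : (l'.map g).head? = some (i.1, i.1) := by rw [hmap]; exact hl.piece.head
    rw [List.head?_map, List.head?_eq_head hne'] at h1
    simp at h1
    exact hginj (by simpa using h1)
  have hlast : l'.getLast hne' = (i', i') := by
    have h1 : (l'.map g).getLast? = some (i'.1, i'.1) := by rw [hmap]; exact hl.piece.last
    rw [List.getLast?_map, List.getLast?_eq_getLast_of_ne_nil hne'] at h1
    simp at h1
    exact hginj (by simpa using h1)
  have hcov : ∀ v : Fin (2*n+1) × Fin (2*n+1), v ∈ l' := by
    intro v
    have hv : (v.1.1, v.2.1) ∈ l := hl.mem_of (by simpa using v.1.isLt) (by simpa using v.2.isLt)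
    rw [← hmap] at hv
    obtain ⟨c, hc, hgc⟩ := List.mem_map.mp hv
    have : c = v := hginj hgc
    rwa [this] at hc
  refine ⟨(walkOfChain l' hchain hne').copy hhead hlast, ?_⟩
  intro v
  rw [SimpleGraph.Walk.support_copy, support_walkOfChain]
  exact @List.count_eq_one_of_mem _ instBEqOfDecidableEq _ _ _ hnodup (hcov v)
end
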